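/- arXiv:1101.3494 — 9 statements merged into one kernel-verified Lean document; each statement's English description precedes it below -/
import Mathlib

section
/- A simple graph G is perfectly colorable if and only if G is perfect and paw-free. -/
/-- The paw graph: vertices `a = 0`, `b = 1`, `c = 2`, `d = 3`,
with edge set `{ab, ac, bc, cd}`. -/
def pawGraph : SimpleGraph (Fin 4) :=
  SimpleGraph.fromEdgeSet {s(0, 1), s(0, 2), s(1, 2), s(2, 3)}

/-- A graph is paw-free if no induced subgraph is isomorphic to the paw. -/
def SimpleGraph.PawFree {V : Type*} (G : SimpleGraph V) : Prop :=
  ¬ ∃ S : Set V, Nonempty (G.induce S ≃g pawGraph)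

/-- A graph is perfect if every induced subgraph has chromatic number
equal to its clique number. -/
def SimpleGraph.IsPerfect {V : Type*} (G : SimpleGraph V) : Prop :=
  ∀ S : Set V, (G.induce S).chromaticNumber = ((G.induce S).cliqueNum : ℕ∞)

/-- A proper coloring is a perfect coloring if every vertex set `S` inducing a
connected subgraph sees exactly `ω(G[S])` distinct colors. -/
def SimpleGraph.IsPerfectColoring {V α : Type*} (G : SimpleGraph V) (C : G.Coloring α) :
    Prop :=
  ∀ S : Set V, (G.induce S).Connected → (⇑C '' S).ncard = (G.induce S).cliqueNum

/-- A graph is perfectly colorable if it admits a perfect coloring. -/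
def SimpleGraph.PerfectlyColorable {V : Type*} (G : SimpleGraph V) : Prop :=
  ∃ (α : Type) (C : G.Coloring α), G.IsPerfectColoring C

/-- A graph is complete multipartite iff non-adjacency is transitive. -/
def SimpleGraph.IsCompleteMultipartiteOld {V : Type*} (G : SimpleGraph V) : Prop :=
  Transitive fun v w => ¬ G.Adj v w

set_option linter.unreachableTactic false
set_option linter.unusedTactic false
set_option linter.unnecessarySimpa false

open SimpleGraph Set

section Aux

variable {V : Type*} {G : SimpleGraph V}

lemma le_cliqueNum_induce [Fintype V] {S : Set V} (t : Finset V) (ht : ↑t ⊆ S)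
    (hc : G.IsClique ↑t) : t.card ≤ (G.induce S).cliqueNum := by
  classical
  haveI : Fintype S := (Set.toFinite S).fintype
  let f : {x // x ∈ t} → ↥S := fun x => ⟨x.1, ht x.2⟩
  have hinj : Function.Injective f := by
    intro x y h
    exact Subtype.ext (congrArg (fun z : ↥S => z.1) h)
  let t' : Finset ↥S := t.attach.map ⟨f, hinj⟩
  have hcard : t'.card = t.card := by simp [t']
  have hcl : (G.induce S).IsClique ↑t' := by
    intro x hx y hy hxy
    simp only [t', Finset.mem_coe, Finset.mem_map, Finset.mem_attach, true_and,
      Function.Embedding.coeFn_mk] at hx hy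
    obtain ⟨a, rfl⟩ := hx
    obtain ⟨b, rfl⟩ := hy
    have hab : (a : V) ≠ (b : V) := by
      intro h
      exact hxy (by simp [f, Subtype.ext_iff, h])
    exact hc a.2 b.2 hab
  have := SimpleGraph.IsClique.card_le_cliqueNum (G := G.induce S) (t := t') (tc := hcl)
  omega

lemma cliqueNum_induce_le [Fintype V] {S : Set V} {n : ℕ}
    (h : ∀ t : Finset V, ↑t ⊆ S → G.IsClique ↑t → t.card ≤ n) :
    (G.induce S).cliqueNum ≤ n := by
  classical
  haveI : Fintype S := (Set.toFinite S).fintype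
  obtain ⟨s, hs⟩ := SimpleGraph.exists_isNClique_cliqueNum (G := G.induce S)
  have hcard := hs.card_eq
  set t : Finset V := s.image Subtype.val with htdef
  have hcardt : t.card = s.card :=
    Finset.card_image_of_injective _ Subtype.val_injective
  have hsub : ↑t ⊆ S := by
    intro x hx
    simp only [htdef, Finset.coe_image, Set.mem_image, Finset.mem_coe] at hx
    obtain ⟨a, _, rfl⟩ := hx
    exact a.2
  have hcl : G.IsClique ↑t := by
    intro x hx y hy hxy
    simp only [htdef, Finset.coe_image, Set.mem_image, Finset.mem_coe] at hx hy
    obtain ⟨a, ha, rfl⟩ := hx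
    obtain ⟨b, hb, rfl⟩ := hy
    have hab : a ≠ b := fun h => hxy (by rw [h])
    exact hs.isClique ha hb hab
  have := h t hsub hcl
  omega

lemma reachable_of_induce {S : Set V} {u v : ↥S} (h : (G.induce S).Reachable u v) :
    G.Reachable u.1 v.1 := h.map (SimpleGraph.Embedding.induce S).toHom

lemma walk_support_reachable {W : Type*} {H : SimpleGraph W} {a b : W} (p : H.Walk a b) :
    ∀ x ∈ p.support, H.Reachable a x := by
  induction p with
  | nil => intro x hx; simp at hx; subst hx; exact Reachable.refl _
  | cons h q ih =>
    intro x hx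
    rw [SimpleGraph.Walk.support_cons] at hx
    rcases List.mem_cons.mp hx with rfl | hx
    · exact Reachable.refl _
    · exact (h.reachable).trans (ih x hx)

lemma exists_adj_of_walk_ne {W : Type*} {H : SimpleGraph W} {a b : W} (p : H.Walk a b)
    (hab : a ≠ b) : ∃ x y, H.Adj x y := by
  cases p with
  | nil => exact absurd rfl hab
  | cons h _ => exact ⟨_, _, h⟩

lemma connected_induce_of_forall_walk {S' : Set V} (hne : S'.Nonempty)
    (h : ∀ u ∈ S', ∀ v ∈ S', ∃ p : G.Walk u v, ∀ x ∈ p.support, x ∈ S') :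
    (G.induce S').Connected := by
  rw [connected_induce_iff, Subgraph.connected_iff_forall_exists_walk_subgraph]
  refine ⟨by simpa using hne, ?_⟩
  intro u v hu hv
  simp only [Subgraph.induce_verts, Subgraph.verts_top] at hu hv
  obtain ⟨p, hp⟩ := h u hu v hv
  refine ⟨p, le_trans p.toSubgraph_le_induce_support ?_⟩
  exact Subgraph.induce_mono_right (fun x hx => hp x hx)

def InTriangle (G : SimpleGraph V) (x : V) : Prop :=
  ∃ p q, G.Adj x p ∧ G.Adj x q ∧ G.Adj p q

lemma tri_prop
    (hnp : ∀ a b c d : V, G.Adj a b → G.Adj a c → G.Adj b c → G.Adj c d →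
      ¬ G.Adj a d → ¬ G.Adj b d → False)
    {a x : V} (p : G.Walk a x) (h : InTriangle G a) : InTriangle G x := by
  induction p with
  | nil => exact h
  | @cons a w x h1 q ih =>
    apply ih
    obtain ⟨p', q', hap, haq, hpq⟩ := h
    by_cases hwp : G.Adj w p'
    · exact ⟨a, p', h1.symm, hwp, hap⟩
    · by_cases hwq : G.Adj w q'
      · exact ⟨a, q', h1.symm, hwq, haq⟩
      · exact (hnp p' q' a w hpq hap.symm haq.symm h1
          (fun hh => hwp hh.symm) (fun hh => hwq hh.symm)).elim

lemma common_tri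
    (hnp : ∀ a b c d : V, G.Adj a b → G.Adj a c → G.Adj b c → G.Adj c d →
      ¬ G.Adj a d → ¬ G.Adj b d → False)
    {x z : V} (hxz : G.Adj x z) (h : InTriangle G x) :
    ∃ r, G.Adj x r ∧ G.Adj z r := by
  obtain ⟨p, q, hxp, hxq, hpq⟩ := h
  by_cases hzp : G.Adj z p
  · exact ⟨p, hxp, hzp⟩
  · by_cases hzq : G.Adj z q
    · exact ⟨q, hxq, hzq⟩
    · exact (hnp p q x z hpq hxp.symm hxq.symm hxz
        (fun hh => hzp hh.symm) (fun hh => hzq hh.symm)).elim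

lemma main_ind
    (hnp : ∀ a b c d : V, G.Adj a b → G.Adj a c → G.Adj b c → G.Adj c d →
      ¬ G.Adj a d → ¬ G.Adj b d → False)
    {y x z r : V} (p : G.Walk y x) :
    G.Adj x z → G.Adj x r → G.Adj z r → ¬ G.Adj y x → ¬ G.Adj y z → False := by
  induction p with
  | nil => intro hxz _ _ _ hyz; exact hyz hxz
  | @cons y w x h q ih =>
    intro hxz hxr hzr hyx hyz
    by_cases hwx : G.Adj w x
    · by_cases hwz : G.Adj w z
      · exact hnp x z w y hxz hwx.symm hwz.symm h.symm
          (fun hh => hyx hh.symm) (fun hh => hyz hh.symm)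
      · by_cases hwr : G.Adj w r
        · by_cases hyr : G.Adj y r
          · -- triangle w y r, pendant z
            exact hnp w y r z h.symm hwr hyr hzr.symm hwz hyz
          · -- triangle x r w, pendant y
            exact hnp x r w y hxr hwx.symm hwr.symm h.symm
              (fun hh => hyx hh.symm) (fun hh => hyr hh.symm)
        · -- pendant w on triangle x z r at x
          exact hnp z r x w hzr hxz.symm hxr.symm hwx.symm
            (fun hh => hwz hh.symm) (fun hh => hwr hh.symm)
    · by_cases hwz : G.Adj w z
      · by_cases hwr : G.Adj w r
        · by_cases hyr : G.Adj y r
          · -- triangle w y r, pendant x at r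
            exact hnp w y r x h.symm hwr hyr hxr.symm hwx hyx
          · -- pendant y at w on triangle z r w
            exact hnp z r w y hzr hwz.symm hwr.symm h.symm
              (fun hh => hyz hh.symm) (fun hh => hyr hh.symm)
        · -- pendant w on triangle x z r at z
          exact hnp x r z w hxr hxz hzr.symm hwz.symm
            (fun hh => hwx hh.symm) (fun hh => hwr hh.symm)
      · exact ih hxz hxr hzr hwx hwz

def HasPawPattern (G : SimpleGraph V) : Prop :=
  ∃ a b c d : V, G.Adj a b ∧ G.Adj a c ∧ G.Adj b c ∧ G.Adj c d ∧ ¬ G.Adj a d ∧ ¬ G.Adj b d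

lemma hasPawPattern_of_iso {S : Set V} (e : G.induce S ≃g pawGraph) : HasPawPattern G := by
  have hadj : ∀ i j : Fin 4, G.Adj (e.symm i).1 (e.symm j).1 ↔ pawGraph.Adj i j := by
    intro i j
    constructor
    · intro h
      have : (G.induce S).Adj (e.symm i) (e.symm j) := h
      simpa using e.symm.map_rel_iff.mp this
    · intro h
      exact e.symm.map_rel_iff.mpr h
  refine ⟨(e.symm 0).1, (e.symm 1).1, (e.symm 2).1, (e.symm 3).1, ?_, ?_, ?_, ?_, ?_, ?_⟩
  · rw [hadj]; simp [pawGraph, SimpleGraph.fromEdgeSet_adj]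
  · rw [hadj]; simp [pawGraph, SimpleGraph.fromEdgeSet_adj]
  · rw [hadj]; simp [pawGraph, SimpleGraph.fromEdgeSet_adj]
  · rw [hadj]; simp [pawGraph, SimpleGraph.fromEdgeSet_adj]
  · rw [hadj]; simp [pawGraph, SimpleGraph.fromEdgeSet_adj]
  · rw [hadj]; simp [pawGraph, SimpleGraph.fromEdgeSet_adj]

lemma not_pawFree_of_hasPawPattern (h : HasPawPattern G) : ¬ G.PawFree := by
  obtain ⟨a, b, c, d, hab, hac, hbc, hcd, had, hbd⟩ := h
  have hab' : a ≠ b := hab.ne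
  have hac' : a ≠ c := hac.ne
  have hbc' : b ≠ c := hbc.ne
  have hcd' : c ≠ d := hcd.ne
  have had' : a ≠ d := fun h => hbd (h ▸ hab.symm)
  have hbd' : b ≠ d := fun h => had (h ▸ hab)
  intro hpf
  apply hpf
  refine ⟨{a, b, c, d}, ⟨?_⟩⟩
  have ha : a ∈ ({a, b, c, d} : Set V) := by simp
  have hb : b ∈ ({a, b, c, d} : Set V) := by simp
  have hc : c ∈ ({a, b, c, d} : Set V) := by simp
  have hd : d ∈ ({a, b, c, d} : Set V) := by simp
  let g : Fin 4 → ↥({a, b, c, d} : Set V) := ![⟨a, ha⟩, ⟨b, hb⟩, ⟨c, hc⟩, ⟨d, hd⟩]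
  have hbij : Function.Bijective g := by
    constructor
    · intro i j hij
      fin_cases i <;> fin_cases j <;> simp_all [g, Subtype.ext_iff] <;>
        first
          | rfl
          | (exfalso; tauto)
    · rintro ⟨x, hx⟩
      rcases hx with rfl | rfl | rfl | rfl
      · exact ⟨0, rfl⟩
      · exact ⟨1, rfl⟩
      · exact ⟨2, rfl⟩
      · exact ⟨3, rfl⟩
  refine SimpleGraph.Iso.symm ⟨Equiv.ofBijective g hbij, ?_⟩
  intro i j
  fin_cases i <;> fin_cases j <;>
    simp [g, Equiv.ofBijective, pawGraph, SimpleGraph.fromEdgeSet_adj,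
      SimpleGraph.comap_adj] <;>
    first
      | assumption
      | (intro hh; exact absurd hh (by assumption))
      | (first | exact hab.symm | exact hac.symm | exact hbc.symm | exact hcd.symm)
      | (intro hh; exact absurd hh.symm (by assumption))
      | skip

lemma cliqueNum_path3 [Fintype V] {x c d : V} (hxc : G.Adj x c) (hcd : G.Adj c d)
    (hxd : ¬ G.Adj x d) (hxd' : x ≠ d) :
    (G.induce ({x, c, d} : Set V)).cliqueNum = 2 := by
  classical
  apply le_antisymm
  · apply _root_.cliqueNum_induce_le
    intro t hsub hclq
    by_contra hcard
    push_neg at hcard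
    obtain ⟨a', b', c', ha', hb', hc', hab, hac, hbc⟩ := Finset.two_lt_card_iff.mp hcard
    have hmem : ∀ u ∈ t, u = x ∨ u = c ∨ u = d := by
      intro u hu
      have := hsub (Finset.mem_coe.mpr hu)
      simpa using this
    have hxt : x ∈ t ∧ d ∈ t := by
      rcases hmem a' ha' with rfl | rfl | rfl <;>
        rcases hmem b' hb' with rfl | rfl | rfl <;>
          rcases hmem c' hc' with rfl | rfl | rfl <;>
            simp_all
    exact hxd (hclq (Finset.mem_coe.mpr hxt.1) (Finset.mem_coe.mpr hxt.2) hxd')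
  · have h2 : ({x, c} : Finset V).card = 2 := Finset.card_pair hxc.ne
    have := le_cliqueNum_induce (G := G) (S := {x, c, d}) ({x, c} : Finset V)
      (by intro u hu; simp at hu; rcases hu with rfl | rfl <;> simp)
      (by rw [Finset.coe_pair]; exact isClique_pair.mpr (fun _ => hxc))
    omega

lemma connected_path3 {x c d : V} (hxc : G.Adj x c) (hcd : G.Adj c d) :
    (G.induce ({x, c, d} : Set V)).Connected := by
  have h : ({x, c} ∪ {c, d} : Set V) = {x, c, d} := by
    ext u; simp; tauto
  have := induce_union_connected (induce_pair_connected_of_adj hxc).preconnected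
    (induce_pair_connected_of_adj hcd).preconnected ⟨c, by simp⟩
  rwa [h] at this

lemma color_eq_path3 [Fintype V] {x c d : V} (hxc : G.Adj x c) (hcd : G.Adj c d)
    (hxd : ¬ G.Adj x d) (hxd' : x ≠ d) {α : Type*} {C : G.Coloring α}
    (hC : G.IsPerfectColoring C) : C d = C x := by
  classical
  by_contra hne
  have h2 := hC {x, c, d} (connected_path3 hxc hcd)
  rw [cliqueNum_path3 hxc hcd hxd hxd'] at h2
  have hxc' : C x ≠ C c := C.valid hxc
  have hcd' : C c ≠ C d := C.valid hcd
  have himg : (⇑C '' {x, c, d} : Set α) = {C x, C c, C d} := by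
    rw [Set.image_insert_eq, Set.image_insert_eq, Set.image_singleton]
  rw [himg] at h2
  have h3 : ({C x, C c, C d} : Set α).ncard = 3 := by
    rw [Set.ncard_insert_of_notMem (by simp [hxc', Ne.symm hne]) (Set.toFinite _),
      Set.ncard_pair hcd']
  omega

lemma exists_injOn_to_fin {β : Type*} {s : Set β} (hs : s.Finite) {n : ℕ}
    (hn : s.ncard ≤ n) (hpos : 0 < n) : ∃ f : β → Fin n, Set.InjOn f s := by
  classical
  haveI := hs.fintype
  have hcard : Fintype.card s ≤ n := by
    rwa [← Nat.card_coe_set_eq, Nat.card_eq_fintype_card] at hn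
  let e := Fintype.equivFin s
  refine ⟨fun a => if h : a ∈ s then Fin.castLE hcard (e ⟨a, h⟩) else ⟨0, hpos⟩, ?_⟩
  intro a ha b hb hfab
  simp only [dif_pos ha, dif_pos hb] at hfab
  have := e.injective (Fin.castLE_injective hcard hfab)
  exact Subtype.ext_iff.mp this

lemma cliqueNum_le_of_colorable {W : Type*} [Fintype W] {H : SimpleGraph W} {n : ℕ}
    (h : H.Colorable n) : H.cliqueNum ≤ n := by
  classical
  obtain ⟨s, hs⟩ := exists_isNClique_cliqueNum (G := H)
  obtain ⟨C⟩ := h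
  have hle : s.card ≤ (Finset.univ : Finset (Fin n)).card := by
    apply Finset.card_le_card_of_injOn (fun v => C v) (fun v _ => Finset.mem_univ _)
    intro u hu v hv heq
    by_contra hne
    exact C.valid (hs.isClique hu hv hne) heq
  simpa [hs.card_eq] using hle

lemma cast_cliqueNum_le_chromaticNumber {W : Type*} [Fintype W] (H : SimpleGraph W) :
    (H.cliqueNum : ℕ∞) ≤ H.chromaticNumber := by
  classical
  have hcol := H.colorable_chromaticNumber_of_fintype
  have h1 : H.cliqueNum ≤ ENat.toNat H.chromaticNumber := cliqueNum_le_of_colorable hcol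
  have hne : H.chromaticNumber ≠ ⊤ :=
    chromaticNumber_ne_top_iff_exists.mpr ⟨_, H.colorable_of_fintype⟩
  calc (H.cliqueNum : ℕ∞) ≤ (ENat.toNat H.chromaticNumber : ℕ∞) := by exact_mod_cast h1
    _ = H.chromaticNumber := ENat.coe_toNat hne

lemma isPerfect_of_isPerfectColoring [Fintype V] {α : Type*} (C : G.Coloring α)
    (hC : G.IsPerfectColoring C) : G.IsPerfect := by
  classical
  intro S
  haveI : Fintype ↥S := (Set.toFinite S).fintype
  set H := G.induce S with hH
  set n := H.cliqueNum with hn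
  have hcol : H.Colorable n := by
    rcases isEmpty_or_nonempty ↥S with he | hne
    · exact Colorable.of_isEmpty n
    · obtain ⟨v⟩ := hne
      have hpos : 0 < n := by
        have h1 := le_cliqueNum_induce (G := G) (S := S) ({v.1} : Finset V)
          (by simpa using v.2) (by simp [isClique_singleton])
        simp at h1; exact h1
      have key : ∀ c : H.ConnectedComponent,
          ∃ gc : α → Fin n, Set.InjOn gc (⇑C '' (Subtype.val '' c.supp)) := by
        intro c
        set S' : Set V := Subtype.val '' c.supp with hS'
        have hsub : S' ⊆ S := by rintro x ⟨u, _, rfl⟩; exact u.2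
        have hconn : (G.induce S').Connected := by
          apply connected_induce_of_forall_walk
          · obtain ⟨w, hw⟩ := c.exists_rep
            exact ⟨w.1, ⟨w, by rw [ConnectedComponent.mem_supp_iff]; exact hw, rfl⟩⟩
          · rintro u ⟨u', hu', rfl⟩ w ⟨w', hw', rfl⟩
            rw [ConnectedComponent.mem_supp_iff] at hu' hw'
            have hr : H.Reachable u' w' := ConnectedComponent.exact (hu'.trans hw'.symm)
            obtain ⟨q⟩ := hr
            refine ⟨q.map (SimpleGraph.Embedding.induce S).toHom, ?_⟩
            intro x hx
            change x ∈ (q.map (SimpleGraph.Embedding.induce S).toHom).support at hx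
            rw [SimpleGraph.Walk.support_map] at hx
            obtain ⟨x', hx', rfl⟩ := List.mem_map.mp hx
            have hrx : H.Reachable u' x' := walk_support_reachable q x' hx'
            refine ⟨x', ?_, rfl⟩
            rw [ConnectedComponent.mem_supp_iff, ← hu']
            exact (ConnectedComponent.sound hrx).symm
        have hcard : (⇑C '' S').ncard ≤ n := by
          rw [hC S' hconn]
          apply cliqueNum_induce_le (G := G) (S := S')
          intro t ht hcl
          exact le_cliqueNum_induce t (fun x hx => hsub (ht hx)) hcl
        exact exists_injOn_to_fin ((Set.toFinite S').image _) hcard hpos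
      choose gfun hg using key
      refine ⟨⟨fun v => gfun (H.connectedComponentMk v) (C v.1), ?_⟩⟩
      intro u w huw
      have hmk : H.connectedComponentMk u = H.connectedComponentMk w :=
        ConnectedComponent.sound huw.reachable
      have hGadj : G.Adj u.1 w.1 := huw
      simp only [hmk]
      intro heq
      apply C.valid hGadj
      refine hg (H.connectedComponentMk w) ?_ ?_ heq
      · exact ⟨u.1, ⟨u, by rw [ConnectedComponent.mem_supp_iff, hmk], rfl⟩, rfl⟩
      · exact ⟨w.1, ⟨w, by rw [ConnectedComponent.mem_supp_iff], rfl⟩, rfl⟩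
  exact le_antisymm (hcol.chromaticNumber_le) (cast_cliqueNum_le_chromaticNumber H)


lemma perfectlyColorable_aux [Fintype V] (hP : G.IsPerfect)
    (hnp : ∀ a b c d : V, G.Adj a b → G.Adj a c → G.Adj b c → G.Adj c d →
      ¬ G.Adj a d → ¬ G.Adj b d → False) :
    ∃ C : G.Coloring (Set V), G.IsPerfectColoring C := by
  classical
  set HT : V → Prop := fun v => ∃ t, G.Reachable v t ∧ InTriangle G t with hHTdef
  have hHT : ∀ {u v : V}, G.Reachable u v → HT v → HT u := by
    rintro u v h ⟨t, ht, htr⟩; exact ⟨t, h.trans ht, htr⟩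
  -- choose 2-colorings of triangle-free components
  have hB : ∀ c : G.ConnectedComponent, ∃ b : V → Fin 2,
      (∀ v ∈ c.supp, ¬ HT v) → ∀ u ∈ c.supp, ∀ v ∈ c.supp, G.Adj u v → b u ≠ b v := by
    intro c
    by_cases htri : ∀ v ∈ c.supp, ¬ HT v
    · have hw2 : (G.induce c.supp).cliqueNum ≤ 2 := by
        apply cliqueNum_induce_le (G := G) (S := c.supp)
        intro t ht hcl
        by_contra hcard
        push_neg at hcard
        obtain ⟨x, y, z, hx, hy, hz, hxy, hxz, hyz⟩ := Finset.two_lt_card_iff.mp hcard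
        have hTx : HT x := ⟨x, Reachable.refl x,
          y, z, hcl (Finset.mem_coe.mpr hx) (Finset.mem_coe.mpr hy) hxy,
          hcl (Finset.mem_coe.mpr hx) (Finset.mem_coe.mpr hz) hxz,
          hcl (Finset.mem_coe.mpr hy) (Finset.mem_coe.mpr hz) hyz⟩
        exact htri x (ht (Finset.mem_coe.mpr hx)) hTx
      have hcol : (G.induce c.supp).Colorable 2 := by
        rw [← chromaticNumber_le_iff_colorable, hP c.supp]
        exact_mod_cast hw2
      obtain ⟨b0⟩ := hcol
      refine ⟨fun v => if h : v ∈ c.supp then b0 ⟨v, h⟩ else 0, ?_⟩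
      intro _ u hu v hv hadj
      simp only [dif_pos hu, dif_pos hv]
      exact b0.valid (by exact hadj)
    · exact ⟨fun _ => 0, fun h => absurd h htri⟩
  choose B hBs using hB
  set b : V → Fin 2 := fun v => B (G.connectedComponentMk v) v with hbdef
  set f : V → Set V := fun v =>
    if HT v then {w | G.Reachable v w ∧ ¬ G.Adj v w} else {w | G.Reachable v w ∧ b w = b v}
    with hfdef
  have hbne : ∀ {u v : V}, G.Adj u v → ¬ HT u → b u ≠ b v := by
    intro u v hadj hnt
    have hmk : G.connectedComponentMk u = G.connectedComponentMk v :=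
      ConnectedComponent.sound hadj.reachable
    have hnt' : ∀ w ∈ (G.connectedComponentMk u).supp, ¬ HT w := by
      intro w hw hHTw
      rw [ConnectedComponent.mem_supp_iff] at hw
      exact hnt (hHT (ConnectedComponent.exact hw).symm hHTw)
    have h := hBs (G.connectedComponentMk u) hnt' u
      (by rw [ConnectedComponent.mem_supp_iff]) v
      (by rw [ConnectedComponent.mem_supp_iff]; exact hmk.symm) hadj
    simpa [hbdef, ← hmk] using h
  have hproper : ∀ {u v : V}, G.Adj u v → f u ≠ f v := by
    intro u v hadj heq
    have hr := hadj.reachable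
    by_cases ht : HT u
    · have htv : HT v := hHT hr.symm ht
      have hvin : v ∈ f v := by
        rw [hfdef]; simp only [if_pos htv, Set.mem_setOf_eq]
        exact ⟨Reachable.refl v, G.irrefl⟩
      rw [← heq, hfdef] at hvin
      simp only [if_pos ht, Set.mem_setOf_eq] at hvin
      exact hvin.2 hadj
    · have htv : ¬ HT v := fun h => ht (hHT hr h)
      have hvin : v ∈ f v := by
        rw [hfdef]; simp only [if_neg htv, Set.mem_setOf_eq]
        exact ⟨Reachable.refl v, by trivial⟩
      rw [← heq, hfdef] at hvin
      simp only [if_neg ht, Set.mem_setOf_eq] at hvin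
      exact hbne hadj ht hvin.2.symm
  refine ⟨⟨f, fun hadj => hproper hadj⟩, ?_⟩
  intro S hconn
  have hCcoe : ⇑(⟨f, fun hadj => hproper hadj⟩ : G.Coloring (Set V)) = f := rfl
  rw [hCcoe]
  obtain ⟨v0s⟩ := hconn.nonempty
  have hreach : ∀ u ∈ S, ∀ w ∈ S, G.Reachable u w := by
    intro u hu w hw
    exact reachable_of_induce (hconn.preconnected ⟨u, hu⟩ ⟨w, hw⟩)
  have hfin : (f '' S).Finite := (Set.toFinite S).image f
  by_cases htri : HT v0s.1
  · -- multipartite component case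
    have hall : ∀ v ∈ S, HT v := fun v hv => hHT (hreach v hv v0s.1 v0s.2) htri
    have key : ∀ u ∈ S, ∀ w ∈ S, ∀ x : V, ¬ G.Adj u w → G.Reachable w x → ¬ G.Adj w x →
        ¬ G.Adj u x := by
      intro u hu w hw x hnuw hrwx hnwx hux
      have hTu : InTriangle G u := by
        obtain ⟨t, hrt, htr⟩ := hall u hu
        exact tri_prop hnp hrt.symm.some htr
      obtain ⟨r, hur, hxr⟩ := common_tri hnp hux hTu
      exact main_ind hnp (hreach w hw u hu).some hux hur hxr
        (fun h => hnuw h.symm) hnwx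
    have hsame : ∀ u ∈ S, ∀ w ∈ S, ¬ G.Adj u w → f u = f w := by
      intro u hu w hw hnadj
      have hfu : f u = {x | G.Reachable u x ∧ ¬ G.Adj u x} := by
        rw [hfdef]; simp only [if_pos (hall u hu)]
      have hfw : f w = {x | G.Reachable w x ∧ ¬ G.Adj w x} := by
        rw [hfdef]; simp only [if_pos (hall w hw)]
      rw [hfu, hfw]
      ext x
      simp only [Set.mem_setOf_eq]
      constructor
      · rintro ⟨h1, h2⟩
        exact ⟨(hreach w hw u hu).trans h1,
          key w hw u hu x (fun h => hnadj h.symm) h1 h2⟩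
      · rintro ⟨h1, h2⟩
        exact ⟨(hreach u hu w hw).trans h1, key u hu w hw x hnadj h1 h2⟩
    apply le_antisymm
    · -- ncard (f '' S) ≤ cliqueNum : build a clique of representatives
      obtain ⟨σ, hσ⟩ : ∃ σ : Set V → V, ∀ A ∈ f '' S, σ A ∈ S ∧ f (σ A) = A := by
        refine ⟨fun A => if h : A ∈ f '' S then h.choose else v0s.1, ?_⟩
        intro A hA
        simp only [dif_pos hA]
        exact ⟨hA.choose_spec.1, hA.choose_spec.2⟩
      have hinj : Set.InjOn σ (f '' S) := by
        intro A hA A' hA' heq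
        rw [← (hσ A hA).2, ← (hσ A' hA').2, heq]
      set R : Set V := σ '' (f '' S) with hRdef
      have hRS : R ⊆ S := by rintro x ⟨A, hA, rfl⟩; exact (hσ A hA).1
      have hRcard : R.ncard = (f '' S).ncard := Set.ncard_image_of_injOn hinj
      have hRfin : R.Finite := hfin.image σ
      have hclq : G.IsClique R := by
        rintro x ⟨A, hA, rfl⟩ y ⟨A', hA', rfl⟩ hne
        have hAA' : A ≠ A' := fun h => hne (by rw [h])
        by_contra hnadj
        exact hAA' (by
          rw [← (hσ A hA).2, ← (hσ A' hA').2]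
          exact hsame _ ((hσ A hA).1) _ ((hσ A' hA').1) hnadj)
      have h1 := le_cliqueNum_induce (G := G) (S := S) hRfin.toFinset
        (by rw [Set.Finite.coe_toFinset]; exact hRS)
        (by rw [Set.Finite.coe_toFinset]; exact hclq)
      rwa [← Set.ncard_eq_toFinset_card R hRfin, hRcard] at h1
    · -- cliqueNum ≤ ncard (f '' S)
      apply cliqueNum_induce_le (G := G) (S := S)
      intro t ht hcl
      have hinj : Set.InjOn f ↑t := by
        intro x hx y hy heq
        by_contra hne
        exact hproper (hcl hx hy hne) heq
      calc t.card = (↑t : Set V).ncard := (Set.ncard_coe_finset t).symm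
        _ = (f '' ↑t).ncard := (Set.ncard_image_of_injOn hinj).symm
        _ ≤ (f '' S).ncard := Set.ncard_le_ncard (Set.image_mono ht) hfin
  · -- triangle-free component case
    have hnone : ∀ v ∈ S, ¬ HT v := fun v hv h =>
      htri (hHT (hreach v0s.1 v0s.2 v hv) h)
    have hfA : ∀ v ∈ S, f v = {w | G.Reachable v0s.1 w ∧ b w = b v} := by
      intro v hv
      rw [hfdef]
      simp only [if_neg (hnone v hv)]
      ext w
      simp only [Set.mem_setOf_eq]
      exact ⟨fun ⟨h1, h2⟩ => ⟨(hreach v0s.1 v0s.2 v hv).trans h1, h2⟩,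
        fun ⟨h1, h2⟩ => ⟨(hreach v hv v0s.1 v0s.2).trans h1, h2⟩⟩
    have hfin2 : ∀ i : Fin 2, i = 0 ∨ i = 1 := by decide
    have hsub2 : f '' S ⊆ {({w | G.Reachable v0s.1 w ∧ b w = 0} : Set V),
        ({w | G.Reachable v0s.1 w ∧ b w = 1} : Set V)} := by
      rintro _ ⟨v, hv, rfl⟩
      rw [hfA v hv]
      rcases hfin2 (b v) with h | h <;> rw [h]
      · exact Set.mem_insert _ _
      · exact Set.mem_insert_of_mem _ rfl
    by_cases hss : ∀ u ∈ S, ∀ w ∈ S, u = w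
    · -- singleton
      have hS : S = {v0s.1} := by
        ext x
        exact ⟨fun hx => hss x hx v0s.1 v0s.2, fun hx => hx ▸ v0s.2⟩
      rw [hS, Set.image_singleton, Set.ncard_singleton]
      apply le_antisymm
      · have h1 := le_cliqueNum_induce (G := G) (S := {v0s.1}) ({v0s.1} : Finset V)
          (by simp) (by simp [isClique_singleton])
        simpa using h1
      · apply cliqueNum_induce_le (G := G) (S := {v0s.1})
        intro t htsub _
        rw [Finset.card_le_one]
        intro x hx y hy
        have h1 := htsub (Finset.mem_coe.mpr hx)
        have h2 := htsub (Finset.mem_coe.mpr hy)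
        simp only [Set.mem_singleton_iff] at h1 h2
        rw [h1, h2]
    · -- at least one edge
      push_neg at hss
      obtain ⟨u, hu, w, hw, huw⟩ := hss
      have hruw : (G.induce S).Reachable ⟨u, hu⟩ ⟨w, hw⟩ :=
        hconn.preconnected ⟨u, hu⟩ ⟨w, hw⟩
      obtain ⟨x', y', hadj'⟩ := exists_adj_of_walk_ne hruw.some
        (fun h => huw (congrArg Subtype.val h))
      have hGxy : G.Adj x'.1 y'.1 := hadj'
      have hxS : x'.1 ∈ S := x'.2
      have hyS : y'.1 ∈ S := y'.2
      have hcard2 : (f '' S).ncard = 2 := by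
        apply le_antisymm
        · calc (f '' S).ncard ≤ ({({w | G.Reachable v0s.1 w ∧ b w = 0} : Set V),
              ({w | G.Reachable v0s.1 w ∧ b w = 1} : Set V)} : Set (Set V)).ncard :=
              Set.ncard_le_ncard hsub2 (Set.toFinite _)
            _ ≤ 2 := by
              apply le_trans (Set.ncard_insert_le _ _)
              simp
        · have hne : f x'.1 ≠ f y'.1 := hproper hGxy
          have h1 : 1 < (f '' S).ncard := by
            rw [Set.one_lt_ncard_iff hfin]
            exact ⟨f x'.1, f y'.1, ⟨x'.1, hxS, rfl⟩, ⟨y'.1, hyS, rfl⟩, hne⟩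
          omega
      rw [hcard2]
      apply le_antisymm
      · have h1 := le_cliqueNum_induce (G := G) (S := S) ({x'.1, y'.1} : Finset V)
          (by intro a ha; simp at ha; rcases ha with rfl | rfl; exacts [hxS, hyS])
          (by rw [Finset.coe_pair]; exact isClique_pair.mpr (fun _ => hGxy))
        rwa [Finset.card_pair hGxy.ne] at h1
      · apply cliqueNum_induce_le (G := G) (S := S)
        intro t htsub hcl
        by_contra hcard
        push_neg at hcard
        obtain ⟨x, y, z, hx, hy, hz, hxy, hxz, hyz⟩ := Finset.two_lt_card_iff.mp hcard
        have hTx : HT x := ⟨x, Reachable.refl x,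
          y, z, hcl (Finset.mem_coe.mpr hx) (Finset.mem_coe.mpr hy) hxy,
          hcl (Finset.mem_coe.mpr hx) (Finset.mem_coe.mpr hz) hxz,
          hcl (Finset.mem_coe.mpr hy) (Finset.mem_coe.mpr hz) hyz⟩
        exact hnone x (htsub (Finset.mem_coe.mpr hx)) hTx

end Aux

/-- A simple graph is perfectly colorable iff it is perfect and paw-free. -/
theorem perfectlyColorable_iff_isPerfect_and_pawFree {V : Type*} [Fintype V]
    (G : SimpleGraph V) :
    G.PerfectlyColorable ↔ G.IsPerfect ∧ G.PawFree := by
  classical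
  constructor
  · rintro ⟨α, C, hC⟩
    refine ⟨isPerfect_of_isPerfectColoring C hC, ?_⟩
    rintro ⟨S, ⟨e⟩⟩
    obtain ⟨a, b, c, d, hab, hac, hbc, hcd, had, hbd⟩ := hasPawPattern_of_iso e
    have hadne : a ≠ d := fun h => hbd (h ▸ hab.symm)
    have hbdne : b ≠ d := fun h => had (h ▸ hab)
    have h1 : C d = C a := color_eq_path3 hac hcd had hadne hC
    have h2 : C d = C b := color_eq_path3 hbc hcd hbd hbdne hC
    exact C.valid hab (h1 ▸ h2)
  · rintro ⟨hP, hpf⟩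
    have hnp : ∀ a b c d : V, G.Adj a b → G.Adj a c → G.Adj b c → G.Adj c d →
        ¬ G.Adj a d → ¬ G.Adj b d → False := by
      intro a b c d hab hac hbc hcd had hbd
      exact not_pawFree_of_hasPawPattern ⟨a, b, c, d, hab, hac, hbc, hcd, had, hbd⟩ hpf
    obtain ⟨C, hC⟩ := perfectlyColorable_aux hP hnp
    have : Countable (Set V) := Finite.to_countable
    obtain ⟨i, hi⟩ := (countable_iff_exists_injective (Set V)).mp this
    refine ⟨ℕ, ⟨fun v => i (C v), fun hadj h => C.valid hadj (hi h)⟩, ?_⟩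
    intro S hconn
    have hival : (⇑(⟨fun v => i (C v), fun hadj h => C.valid hadj (hi h)⟩ : G.Coloring ℕ) '' S)
        = i '' (⇑C '' S) := by
      rw [← Set.image_comp]; rfl
    rw [hival, Set.ncard_image_of_injective _ hi]
    exact hC S hconn
end

section
/- If a simple graph G is perfectly colorable, then G is perfect. -/
/-- A graph is complete multipartite iff non-adjacency is transitive. -/
def SimpleGraph.IsCompleteMultipartite' {V : Type*} (G : SimpleGraph V) : Prop :=
  Transitive fun v w => ¬ G.Adj v w

open SimpleGraph

section Aux

variable {W : Type*}

lemma aux_connected_induce_supp (G : SimpleGraph W) (K : G.ConnectedComponent) :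
    (G.induce K.supp).Connected := by
  classical
  induction K using SimpleGraph.ConnectedComponent.ind with
  | _ u =>
  apply G.induce_connected_of_patches u (by simp)
  intro v hv
  have hr : G.Reachable u v := (ConnectedComponent.exact hv).symm
  obtain ⟨p⟩ := hr
  refine ⟨{w | w ∈ p.support}, ?_, p.start_mem_support, p.end_mem_support,
    (p.connected_induce_support).preconnected _ _⟩
  intro w hw
  exact (ConnectedComponent.sound (p.takeUntil w hw).reachable).symm

lemma aux_cliqueNum_le_of_embedding {A B : Type*} [Fintype A] [Fintype B]
    {H : SimpleGraph A} {H' : SimpleGraph B} (f : H ↪g H') :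
    H.cliqueNum ≤ H'.cliqueNum := by
  classical
  obtain ⟨s, hs⟩ := H.exists_isNClique_cliqueNum
  have hclique : H'.IsClique (s.image f) := by
    intro a ha b hb hne
    simp only [Finset.coe_image, Set.mem_image, Finset.mem_coe] at ha hb
    obtain ⟨a', ha', rfl⟩ := ha
    obtain ⟨b', hb', rfl⟩ := hb
    exact f.map_adj_iff.mpr (hs.1 ha' hb' (fun h => hne (by rw [h])))
  have hcard : (s.image f).card = H.cliqueNum := by
    rw [Finset.card_image_of_injective _ f.injective, hs.2]
  calc H.cliqueNum = (s.image f).card := hcard.symm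
    _ ≤ H'.cliqueNum := hclique.card_le_cliqueNum

lemma aux_colorable_cliqueNum [Fintype W] (G : SimpleGraph W)
    {α : Type} (C : G.Coloring α) (hC : G.IsPerfectColoring C) :
    G.Colorable G.cliqueNum := by
  classical
  by_cases hne : Nonempty W
  · obtain ⟨v₀⟩ := hne
    have hpos : 1 ≤ G.cliqueNum := by
      have h1 : G.IsClique ({v₀} : Finset W) := by simp
      simpa using h1.card_le_cliqueNum
    have key : ∀ K : G.ConnectedComponent,
        ∃ f : α → Fin G.cliqueNum, Set.InjOn f (⇑C '' K.supp) := by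
      intro K
      have hconn := aux_connected_induce_supp G K
      have hcard : (⇑C '' K.supp).ncard = (G.induce K.supp).cliqueNum := hC K.supp hconn
      haveI : Fintype ↥K.supp := Fintype.ofFinite _
      have hle : (G.induce K.supp).cliqueNum ≤ G.cliqueNum :=
        aux_cliqueNum_le_of_embedding (Embedding.induce K.supp)
      haveI : Fintype ↥(⇑C '' K.supp) := Fintype.ofFinite _
      have hcc : Fintype.card ↥(⇑C '' K.supp) = (⇑C '' K.supp).ncard := by
        rw [← Nat.card_eq_fintype_card, Nat.card_coe_set_eq]
      have hcard' : Fintype.card ↥(⇑C '' K.supp) ≤ Fintype.card (Fin G.cliqueNum) := by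
        rw [Fintype.card_fin, hcc, hcard]; exact hle
      obtain ⟨e⟩ := Function.Embedding.nonempty_of_card_le hcard'
      refine ⟨fun x => if h : x ∈ ⇑C '' K.supp then e ⟨x, h⟩ else ⟨0, hpos⟩, ?_⟩
      intro x hx y hy hxy
      simp only [dif_pos hx, dif_pos hy] at hxy
      simpa using e.injective hxy
    choose f hf using key
    refine ⟨⟨fun v => f (G.connectedComponentMk v) (C v), ?_⟩⟩
    intro v w hadj heq
    have hcomp : G.connectedComponentMk w = G.connectedComponentMk v :=
      (ConnectedComponent.connectedComponentMk_eq_of_adj hadj).symm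
    simp only [hcomp] at heq
    have hv : C v ∈ ⇑C '' (G.connectedComponentMk v).supp := ⟨v, rfl, rfl⟩
    have hw : C w ∈ ⇑C '' (G.connectedComponentMk v).supp := ⟨w, hcomp, rfl⟩
    exact C.valid hadj (hf _ hv hw heq)
  · exact ⟨⟨fun v => absurd ⟨v⟩ hne, fun {a} => absurd ⟨a⟩ hne⟩⟩

lemma aux_chromatic_eq_clique [Fintype W] (G : SimpleGraph W)
    (h : G.PerfectlyColorable) :
    G.chromaticNumber = (G.cliqueNum : ℕ∞) := by
  obtain ⟨α, C, hC⟩ := h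
  refine le_antisymm ((aux_colorable_cliqueNum G C hC).chromaticNumber_le) ?_
  obtain ⟨s, hs⟩ := G.exists_isNClique_cliqueNum
  calc (G.cliqueNum : ℕ∞) = (s.card : ℕ∞) := by rw [hs.2]
    _ ≤ G.chromaticNumber := hs.1.card_le_chromaticNumber

lemma aux_perfectlyColorable_induce [Fintype W] (G : SimpleGraph W)
    (h : G.PerfectlyColorable) (S : Set W) :
    (G.induce S).PerfectlyColorable := by
  classical
  obtain ⟨α, C, hC⟩ := h
  refine ⟨α, ⟨fun v => C ↑v, fun {a b} hab => C.valid hab⟩, ?_⟩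
  intro T hT
  set S' : Set W := Subtype.val '' T with hS'
  have iso : (G.induce S).induce T ≃g G.induce S' :=
    ⟨Equiv.Set.image Subtype.val T Subtype.val_injective, by
      rintro ⟨a, ha⟩ ⟨b, hb⟩
      simp [Equiv.Set.image, Equiv.Set.imageOfInjOn, comap_adj]⟩
  have hconn : (G.induce S').Connected := iso.connected_iff.mp hT
  have hval := hC S' hconn
  haveI : Fintype ↥S := Fintype.ofFinite _
  haveI : Fintype ↥T := Fintype.ofFinite _
  haveI : Fintype ↥S' := Fintype.ofFinite _
  have hclique : ((G.induce S).induce T).cliqueNum = (G.induce S').cliqueNum :=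
    le_antisymm (aux_cliqueNum_le_of_embedding iso.toEmbedding)
      (aux_cliqueNum_le_of_embedding iso.symm.toEmbedding)
  have himg : ⇑C '' S' = (fun v : ↥S => C ↑v) '' T := by
    rw [hS', Set.image_image]
  rw [show ⇑(⟨fun v => C ↑v, fun {a b} hab => C.valid hab⟩ : (G.induce S).Coloring α)
      = fun v : ↥S => C ↑v from rfl]
  rw [← himg, hclique]
  exact hval

end Aux

/-- If a simple graph is perfectly colorable, then it is perfect. -/
theorem isPerfect_of_perfectlyColorable {V : Type*} [Fintype V]
    (G : SimpleGraph V) (h : G.PerfectlyColorable) :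
    G.IsPerfect := by
  intro S
  haveI : Fintype ↥S := Fintype.ofFinite _
  exact aux_chromatic_eq_clique (G.induce S) (aux_perfectlyColorable_induce G h S)
end

section
/- If a simple graph G is perfectly colorable, then G is paw-free. -/
lemma pawConnected : pawGraph.Connected := by
  rw [SimpleGraph.connected_iff]
  refine ⟨fun u v => ?_, ⟨0⟩⟩
  have h02 : pawGraph.Adj 0 2 := by simp [pawGraph]
  have h12 : pawGraph.Adj 1 2 := by simp [pawGraph]
  have h23 : pawGraph.Adj 2 3 := by simp [pawGraph]
  have key : ∀ w : Fin 4, pawGraph.Reachable w 2 := by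
    intro w
    fin_cases w
    · exact h02.reachable
    · exact h12.reachable
    · rfl
    · exact h23.symm.reachable
  exact (key u).trans (key v).symm

lemma cliqueNum_eq_of {W : Type*} [Fintype W] (H : SimpleGraph W) (n : ℕ)
    (h1 : ∃ s : Finset W, H.IsNClique n s)
    (h2 : ∀ t : Finset W, H.IsClique (t : Set W) → t.card ≤ n) :
    H.cliqueNum = n := by
  obtain ⟨s, hs⟩ := h1
  refine le_antisymm ?_ ?_
  · obtain ⟨t, ht⟩ := H.exists_isNClique_cliqueNum
    exact ht.2 ▸ h2 t ht.1
  · calc n = s.card := hs.2.symm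
      _ ≤ _ := SimpleGraph.IsClique.card_le_cliqueNum (tc := hs.1)

lemma path3_connected {V : Type*} (G : SimpleGraph V) {u v w : V}
    (huv : G.Adj u v) (hvw : G.Adj v w) :
    (G.induce {u, v, w}).Connected := by
  rw [SimpleGraph.connected_iff]
  refine ⟨fun x y => ?_, ⟨⟨v, by simp⟩⟩⟩
  have key : ∀ x : ({u, v, w} : Set V), (G.induce {u, v, w}).Reachable x ⟨v, by simp⟩ := by
    rintro ⟨x, hx⟩
    rcases hx with rfl | rfl | rfl
    · exact SimpleGraph.Adj.reachable (by simpa using huv)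
    · rfl
    · exact SimpleGraph.Adj.reachable (by simpa using hvw.symm)
  exact (key x).trans (key y).symm

lemma path3_cliqueNum {V : Type*} [Fintype V] (G : SimpleGraph V) {u v w : V}
    (huv : G.Adj u v) (hvw : G.Adj v w) (huw : ¬ G.Adj u w) (hne : u ≠ w) :
    (G.induce {u, v, w}).cliqueNum = 2 := by
  classical
  haveI : Fintype ↥({u, v, w} : Set V) := Fintype.ofFinite _
  have huv' : u ≠ v := huv.ne
  have hvw' : v ≠ w := hvw.ne
  have hcard3 : Fintype.card ↥({u, v, w} : Set V) = 3 := by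
    rw [← Set.toFinset_card]
    rw [Set.toFinset_insert, Set.toFinset_insert, Set.toFinset_singleton]
    rw [Finset.card_insert_of_notMem (by simp [huv', hne]),
      Finset.card_insert_of_notMem (by simp [hvw'])]
    rfl
  apply cliqueNum_eq_of
  · refine ⟨{⟨u, by simp⟩, ⟨v, by simp⟩}, ?_, ?_⟩
    · intro x hx y hy hxy
      simp only [Finset.coe_insert, Finset.coe_singleton, Set.mem_insert_iff,
        Set.mem_singleton_iff] at hx hy
      rcases hx with rfl | rfl <;> rcases hy with rfl | rfl
      · exact absurd rfl hxy
      · simpa using huv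
      · simpa using huv.symm
      · exact absurd rfl hxy
    · rw [Finset.card_insert_of_notMem (by simp [huv']), Finset.card_singleton]
  · intro t ht
    by_contra hlt
    push_neg at hlt
    have hle : t.card ≤ 3 := hcard3 ▸ t.card_le_univ
    have htu : t = Finset.univ := Finset.eq_univ_of_card t (by omega)
    have hu : (⟨u, by simp⟩ : ↥({u, v, w} : Set V)) ∈ t := htu ▸ Finset.mem_univ _
    have hw : (⟨w, by simp⟩ : ↥({u, v, w} : Set V)) ∈ t := htu ▸ Finset.mem_univ _
    have := ht hu hw (by simp [hne])
    exact huw (by simpa using this)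

/-- If a simple graph is perfectly colorable, then it is paw-free. -/
theorem pawFree_of_perfectlyColorable {V : Type*} [Fintype V]
    (G : SimpleGraph V) (h : G.PerfectlyColorable) :
    G.PawFree := by
  classical
  obtain ⟨α, C, hC⟩ := h
  rintro ⟨S, ⟨e⟩⟩
  set f : Fin 4 → V := fun i => ((e.symm i : ↥S) : V) with hf
  have hmem : ∀ i, f i ∈ S := fun i => (e.symm i).2
  have hinj : ∀ i j : Fin 4, f i = f j → i = j := by
    intro i j hij
    exact e.symm.toEquiv.injective (Subtype.ext hij)
  have hadj : ∀ i j, G.Adj (f i) (f j) ↔ pawGraph.Adj i j := by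
    intro i j
    rw [← e.symm.map_adj_iff]
    simp [SimpleGraph.comap_adj, f]
  have h01 : G.Adj (f 0) (f 1) := (hadj 0 1).2 (by simp [pawGraph])
  have h02 : G.Adj (f 0) (f 2) := (hadj 0 2).2 (by simp [pawGraph])
  have h12 : G.Adj (f 1) (f 2) := (hadj 1 2).2 (by simp [pawGraph])
  have h23 : G.Adj (f 2) (f 3) := (hadj 2 3).2 (by simp [pawGraph])
  have h03 : ¬ G.Adj (f 0) (f 3) := fun hh => by simpa [pawGraph] using (hadj 0 3).1 hh
  have h13 : ¬ G.Adj (f 1) (f 3) := fun hh => by simpa [pawGraph] using (hadj 1 3).1 hh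
  have hS : S = {f 0, f 1, f 2, f 3} := by
    ext x
    simp only [Set.mem_insert_iff, Set.mem_singleton_iff]
    constructor
    · intro hx
      obtain ⟨i, hi⟩ : ∃ i, e.symm i = ⟨x, hx⟩ := ⟨e ⟨x, hx⟩, e.toEquiv.symm_apply_apply _⟩
      have hx' : f i = x := congrArg Subtype.val hi
      fin_cases i
      · exact Or.inl hx'.symm
      · exact Or.inr (Or.inl hx'.symm)
      · exact Or.inr (Or.inr (Or.inl hx'.symm))
      · exact Or.inr (Or.inr (Or.inr hx'.symm))
    · rintro (rfl | rfl | rfl | rfl) <;> exact hmem _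
  have d01 : C (f 0) ≠ C (f 1) := C.valid h01
  have d02 : C (f 0) ≠ C (f 2) := C.valid h02
  have d12 : C (f 1) ≠ C (f 2) := C.valid h12
  have d23 : C (f 2) ≠ C (f 3) := C.valid h23
  haveI : Fintype ↥S := Fintype.ofEquiv (Fin 4) e.toEquiv.symm
  have hcard4 : Fintype.card ↥S = 4 := by
    have := Fintype.card_congr e.toEquiv
    simpa using this
  have hcnS : (G.induce S).cliqueNum = 3 := by
    apply cliqueNum_eq_of
    · refine ⟨{e.symm 0, e.symm 1, e.symm 2}, ?_, ?_⟩
      · intro x hx y hy hxy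
        simp only [Finset.coe_insert, Finset.coe_singleton, Set.mem_insert_iff,
          Set.mem_singleton_iff] at hx hy
        have A : ∀ i j : Fin 4, pawGraph.Adj i j → (G.induce S).Adj (e.symm i) (e.symm j) :=
          fun i j hij => e.symm.map_adj_iff.mpr hij
        rcases hx with rfl | rfl | rfl <;> rcases hy with rfl | rfl | rfl <;>
          first
          | exact absurd rfl hxy
          | exact A _ _ (by simp [pawGraph])
      · rw [Finset.card_insert_of_notMem (by simp), Finset.card_insert_of_notMem (by simp),
          Finset.card_singleton]
    · intro t ht
      by_contra hlt
      push_neg at hlt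
      have hle : t.card ≤ 4 := hcard4 ▸ t.card_le_univ
      have htu : t = Finset.univ := Finset.eq_univ_of_card t (by omega)
      have hm0 : e.symm 0 ∈ t := htu ▸ Finset.mem_univ _
      have hm3 : e.symm 3 ∈ t := htu ▸ Finset.mem_univ _
      have hne03 : e.symm 0 ≠ e.symm 3 := by simp
      have := ht hm0 hm3 hne03
      exact (by simp [pawGraph] : ¬ pawGraph.Adj 0 3) (e.symm.map_adj_iff.mp this)
  have hconnS : (G.induce S).Connected := e.connected_iff.mpr pawConnected
  have hnc3 : ({C (f 0), C (f 1), C (f 2), C (f 3)} : Set α).ncard = 3 := by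
    have := hC S hconnS
    rw [hcnS, hS] at this
    have himg : ⇑C '' ({f 0, f 1, f 2, f 3} : Set V) = {C (f 0), C (f 1), C (f 2), C (f 3)} := by
      simp [Set.image_insert_eq]
    rw [himg] at this
    exact this
  have hd3 : C (f 3) = C (f 0) ∨ C (f 3) = C (f 1) := by
    by_contra hcon
    push_neg at hcon
    obtain ⟨h30, h31⟩ := hcon
    have h4 : ({C (f 0), C (f 1), C (f 2), C (f 3)} : Set α).ncard = 4 := by
      rw [Set.ncard_insert_of_notMem (by simp [d01, d02, h30.symm]),
        Set.ncard_insert_of_notMem (by simp [d12, h31.symm]),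
        Set.ncard_pair d23]
    rw [h4] at hnc3
    exact absurd hnc3 (by norm_num)
  rcases hd3 with h30 | h31
  · have hconn := path3_connected G h12 h23
    have hcn := path3_cliqueNum G h12 h23 h13
      (fun hh => absurd (hinj 1 3 hh) (by decide))
    have hTC := hC {f 1, f 2, f 3} hconn
    rw [hcn, Set.image_insert_eq, Set.image_insert_eq, Set.image_singleton] at hTC
    have d13 : C (f 1) ≠ C (f 3) := fun hh => d01 (hh.trans h30).symm
    rw [Set.ncard_insert_of_notMem (by simp [d12, d13]), Set.ncard_pair d23] at hTC
    exact absurd hTC (by norm_num)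
  · have hconn := path3_connected G h02 h23
    have hcn := path3_cliqueNum G h02 h23 h03
      (fun hh => absurd (hinj 0 3 hh) (by decide))
    have hTC := hC {f 0, f 2, f 3} hconn
    rw [hcn, Set.image_insert_eq, Set.image_insert_eq, Set.image_singleton] at hTC
    have d03 : C (f 0) ≠ C (f 3) := fun hh => d01 (hh.trans h31)
    rw [Set.ncard_insert_of_notMem (by simp [d02, d03]), Set.ncard_pair d23] at hTC
    exact absurd hTC (by norm_num)
end

section
/- If a simple graph G contains an induced subgraph isomorphic to the paw, then G is not perfectly colorable. -/
section Aux
open SimpleGraph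


lemma path3_aux {V : Type*} [Fintype V] (G : SimpleGraph V) (x y z : V)
    (hxy : G.Adj x y) (hyz : G.Adj y z) (hxz : ¬ G.Adj x z) (hne : x ≠ z) :
    (G.induce ({x, y, z} : Set V)).Connected ∧
      (G.induce ({x, y, z} : Set V)).cliqueNum = 2 := by
  classical
  set T : Set V := {x, y, z} with hT
  have hxT : x ∈ T := by simp [hT]
  have hyT : y ∈ T := by simp [hT]
  have hzT : z ∈ T := by simp [hT]
  haveI : Fintype ↥T := Fintype.ofFinite _
  set H := G.induce T with hH
  have hadjxy : H.Adj ⟨x, hxT⟩ ⟨y, hyT⟩ := hxy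
  have hadjyz : H.Adj ⟨y, hyT⟩ ⟨z, hzT⟩ := hyz
  constructor
  · rw [connected_iff]
    refine ⟨?_, ⟨⟨x, hxT⟩⟩⟩
    intro u v
    have key : ∀ w : ↥T, H.Reachable w ⟨y, hyT⟩ := by
      rintro ⟨w, hw⟩
      rcases hw with rfl | rfl | rfl
      · exact hadjxy.reachable
      · exact Reachable.refl _
      · exact (hadjyz.symm).reachable
    exact (key u).trans (key v).symm
  · apply le_antisymm
    · refine csSup_le ⟨0, by simp [isNClique_empty.mpr rfl]⟩ ?_
      rintro n ⟨s, hs⟩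
      by_contra hn
      push_neg at hn
      have h3 : 3 ≤ s.card := by rw [hs.card_eq]; omega
      -- image of s under coercion
      have hinj : Set.InjOn (fun a : ↥T => (a : V)) s := fun a _ b _ hab => Subtype.ext hab
      have hcard : (s.image (fun a : ↥T => (a : V))).card = s.card :=
        Finset.card_image_of_injOn hinj
      have hsub : s.image (fun a : ↥T => (a : V)) ⊆ {x, y, z} := by
        intro v hv
        simp only [Finset.mem_image] at hv
        obtain ⟨a, _, rfl⟩ := hv
        have := a.2
        simp only [hT, Set.mem_insert_iff, Set.mem_singleton_iff] at this
        simpa using this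
      have hle3 : ({x, y, z} : Finset V).card ≤ 3 := by
        apply le_trans (Finset.card_insert_le _ _)
        have := Finset.card_insert_le y ({z} : Finset V)
        simp only [Finset.card_singleton] at this ⊢
        omega
      have heq : s.image (fun a : ↥T => (a : V)) = {x, y, z} :=
        Finset.eq_of_subset_of_card_le hsub (le_trans hle3 (le_trans h3 hcard.symm.le))
      have hxmem : x ∈ s.image (fun a : ↥T => (a : V)) := by rw [heq]; simp
      have hzmem : z ∈ s.image (fun a : ↥T => (a : V)) := by rw [heq]; simp
      simp only [Finset.mem_image] at hxmem hzmem
      obtain ⟨a, ha, hax⟩ := hxmem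
      obtain ⟨b, hb, hbz⟩ := hzmem
      have hab : a ≠ b := fun hh => hne (by rw [← hax, hh, hbz])
      have h := hs.isClique ha hb hab
      have h' : G.Adj (a : V) (b : V) := h
      rw [hax, hbz] at h'
      exact hxz h'
    · have h2 : ({⟨x, hxT⟩, ⟨y, hyT⟩} : Finset ↥T).card = 2 := by
        rw [Finset.card_insert_of_notMem (by simp [hxy.ne]), Finset.card_singleton]
      calc 2 = ({⟨x, hxT⟩, ⟨y, hyT⟩} : Finset ↥T).card := h2.symm
        _ ≤ H.cliqueNum := IsClique.card_le_cliqueNum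
          (tc := by
            intro u hu v hv huv
            simp only [Finset.coe_insert, Set.mem_insert_iff, Finset.coe_singleton,
              Set.mem_singleton_iff] at hu hv
            rcases hu with rfl | rfl <;> rcases hv with rfl | rfl
            · exact absurd rfl huv
            · exact hadjxy
            · exact hadjxy.symm
            · exact absurd rfl huv)

lemma color_eq_of_path3 {V α : Type*} [Fintype V] {G : SimpleGraph V} {C : G.Coloring α}
    (hC : G.IsPerfectColoring C) (x y z : V)
    (hxy : G.Adj x y) (hyz : G.Adj y z) (hxz : ¬ G.Adj x z) (hne : x ≠ z) :
    C x = C z := by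
  obtain ⟨hconn, hclq⟩ := path3_aux G x y z hxy hyz hxz hne
  have hcard := hC {x, y, z} hconn
  rw [hclq] at hcard
  have himg : ⇑C '' ({x, y, z} : Set V) = {C x, C y, C z} := by
    simp [Set.image_insert_eq]
  rw [himg] at hcard
  by_contra had
  have h1 : C x ≠ C y := C.valid hxy
  have h2 : C y ≠ C z := C.valid hyz
  have : ({C x, C y, C z} : Set α).ncard = 3 := by
    rw [Set.ncard_insert_of_notMem (by simp [h1, had]) (Set.toFinite _),
      Set.ncard_insert_of_notMem (by simp [h2]) (Set.toFinite _), Set.ncard_singleton]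
  omega


end Aux

/-- A graph with an induced paw is not perfectly colorable. -/
theorem not_perfectlyColorable_of_induced_paw {V : Type*} [Fintype V]
    (G : SimpleGraph V) (S : Set V) (h : Nonempty (G.induce S ≃g pawGraph)) :
    ¬ G.PerfectlyColorable := by
  obtain ⟨e⟩ := h
  rintro ⟨α, C, hC⟩
  let f := e.symm
  have key : ∀ u v : Fin 4, G.Adj ((f u : ↥S) : V) ((f v : ↥S) : V) ↔ pawGraph.Adj u v :=
    fun u v => f.map_adj_iff
  have hne : ∀ u v : Fin 4, u ≠ v → ((f u : ↥S) : V) ≠ ((f v : ↥S) : V) := by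
    intro u v huv hh
    exact huv (f.injective (Subtype.ext hh))
  have paw01 : pawGraph.Adj 0 1 := by simp [pawGraph]
  have paw02 : pawGraph.Adj 0 2 := by simp [pawGraph]
  have paw12 : pawGraph.Adj 1 2 := by simp [pawGraph]
  have paw23 : pawGraph.Adj 2 3 := by simp [pawGraph]
  have paw03 : ¬ pawGraph.Adj 0 3 := by simp [pawGraph]
  have paw13 : ¬ pawGraph.Adj 1 3 := by simp [pawGraph]
  have had : C ((f 0 : ↥S) : V) = C ((f 3 : ↥S) : V) :=
    color_eq_of_path3 hC _ _ _ ((key 0 2).mpr paw02) ((key 2 3).mpr paw23)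
      (fun hh => paw03 ((key 0 3).mp hh)) (hne 0 3 (by decide))
  have hbd : C ((f 1 : ↥S) : V) = C ((f 3 : ↥S) : V) :=
    color_eq_of_path3 hC _ _ _ ((key 1 2).mpr paw12) ((key 2 3).mpr paw23)
      (fun hh => paw13 ((key 1 3).mp hh)) (hne 1 3 (by decide))
  exact C.valid ((key 0 1).mpr paw01) (had.trans hbd.symm)
end

section
/- A simple graph G is perfect and paw-free if and only if every connected component of G is bipartite or complete multipartite. -/
open SimpleGraph

section Aux

lemma pawGraph_adj_iff : ∀ i j : Fin 4, pawGraph.Adj i j ↔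
    ((i=0∧j=1)∨(i=1∧j=0)∨(i=0∧j=2)∨(i=2∧j=0)∨(i=1∧j=2)∨(i=2∧j=1)∨(i=2∧j=3)∨(i=3∧j=2)) := by
  intro i j
  rw [pawGraph, SimpleGraph.fromEdgeSet_adj]
  simp only [Set.mem_insert_iff, Set.mem_singleton_iff, Sym2.eq, Sym2.rel_iff', Prod.mk.injEq,
    Prod.swap_prod_mk, ne_eq]
  fin_cases i <;> fin_cases j <;> simp_all

/-- If `G` is paw-free, there is no paw configuration `a b c d`. -/
lemma SimpleGraph.PawFree.no_config {V : Type*} {G : SimpleGraph V} (hG : G.PawFree)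
    (a b c d : V) (hab : G.Adj a b) (hac : G.Adj a c) (hbc : G.Adj b c) (hcd : G.Adj c d)
    (had : ¬ G.Adj a d) (hbd : ¬ G.Adj b d) (nad : a ≠ d) (nbd : b ≠ d) : False := by
  apply hG
  refine ⟨{a, b, c, d}, ⟨?_⟩⟩
  have nab := hab.ne
  have nac := hac.ne
  have nbc := hbc.ne
  have ncd := hcd.ne
  let f : Fin 4 → ({a, b, c, d} : Set V) :=
    ![⟨a, by simp⟩, ⟨b, by simp⟩, ⟨c, by simp⟩, ⟨d, by simp⟩]
  have hbij : Function.Bijective f := by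
    constructor
    · intro i j hij
      fin_cases i <;> fin_cases j <;> simp_all [f, Subtype.ext_iff]
    · rintro ⟨x, hx⟩
      rcases hx with h | h | h | h
      · exact ⟨0, by simp [f, h]⟩
      · exact ⟨1, by simp [f, h]⟩
      · exact ⟨2, by simp [f, h]⟩
      · exact ⟨3, by simp [f, Set.mem_singleton_iff.mp h]⟩
  refine SimpleGraph.Iso.symm ⟨Equiv.ofBijective f hbij, ?_⟩
  intro i j
  show (G.induce _).Adj (f i) (f j) ↔ pawGraph.Adj i j
  rw [pawGraph_adj_iff]
  fin_cases i <;> fin_cases j <;>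
    simp_all [f, G.adj_comm d a, G.adj_comm d b, G.adj_comm c a, G.adj_comm c b,
      G.adj_comm b a, G.adj_comm d c]

/-- In a paw-free graph, a vertex adjacent to a vertex of a triangle (and not in it)
is adjacent to at least two of its vertices. -/
lemma two_of_triangle {V : Type*} {G : SimpleGraph V} (hG : G.PawFree)
    {x y z v : V} (hxy : G.Adj x y) (hxz : G.Adj x z) (hyz : G.Adj y z)
    (hvx : G.Adj v x) (hvy : v ≠ y) (hvz : v ≠ z) : G.Adj v y ∨ G.Adj v z := by
  by_contra h
  push_neg at h
  exact hG.no_config y z x v hyz hxy.symm hxz.symm hvx.symm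
    (fun a => h.1 a.symm) (fun a => h.2 a.symm) (Ne.symm hvy) (Ne.symm hvz)

/-- In a connected paw-free graph, every vertex is in a given triangle or adjacent to
at least two of its vertices. -/
lemma mem_or_two_adj {V : Type*} {G : SimpleGraph V} (hG : G.PawFree) (hc : G.Connected)
    {a b c : V} (hab : G.Adj a b) (hac : G.Adj a c) (hbc : G.Adj b c) (v : V) :
    v = a ∨ v = b ∨ v = c ∨ (G.Adj v a ∧ G.Adj v b) ∨ (G.Adj v a ∧ G.Adj v c) ∨
      (G.Adj v b ∧ G.Adj v c) := by
  set Q : V → Prop := fun v => v = a ∨ v = b ∨ v = c ∨ (G.Adj v a ∧ G.Adj v b) ∨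
      (G.Adj v a ∧ G.Adj v c) ∨ (G.Adj v b ∧ G.Adj v c) with hQ
  have step : ∀ u w, Q u → G.Adj u w → Q w := by
    intro u w hu huw
    by_cases hwa : w = a; · exact Or.inl hwa
    by_cases hwb : w = b; · exact Or.inr (Or.inl hwb)
    by_cases hwc : w = c; · exact Or.inr (Or.inr (Or.inl hwc))
    have boota : G.Adj w a → Q w := fun h =>
      (two_of_triangle hG hab hac hbc h hwb hwc).elim
        (fun h2 => by simp [hQ, h, h2]) (fun h2 => by simp [hQ, h, h2])
    have bootb : G.Adj w b → Q w := fun h =>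
      (two_of_triangle hG hab.symm hbc hac (v := w) h hwa hwc).elim
        (fun h2 => by simp [hQ, h, h2]) (fun h2 => by simp [hQ, h, h2])
    have bootc : G.Adj w c → Q w := fun h =>
      (two_of_triangle hG hac.symm hbc.symm hab (v := w) h hwa hwb).elim
        (fun h2 => by simp [hQ, h, h2]) (fun h2 => by simp [hQ, h, h2])
    rcases hu with rfl | rfl | rfl | ⟨h1, h2⟩ | ⟨h1, h2⟩ | ⟨h1, h2⟩
    · exact boota huw.symm
    · exact bootb huw.symm
    · exact bootc huw.symm
    · exact (two_of_triangle hG h1 h2 hab huw.symm hwa hwb).elim boota bootb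
    · exact (two_of_triangle hG h1 h2 hac huw.symm hwa hwc).elim boota bootc
    · exact (two_of_triangle hG h1 h2 hbc huw.symm hwb hwc).elim bootb bootc
  have walk : ∀ {u w : V} (_ : G.Walk u w), Q u → Q w := by
    intro u w p
    induction p with
    | nil => exact id
    | cons h _ ih => exact fun hu => ih (step _ _ hu h)
  exact walk (hc.preconnected a v).some (Or.inl rfl)

/-- Olariu: a connected paw-free graph with a triangle is complete multipartite. -/
lemma olariu {V : Type*} {G : SimpleGraph V} (hG : G.PawFree) (hc : G.Connected)
    {a b c : V} (hab : G.Adj a b) (hac : G.Adj a c) (hbc : G.Adj b c) :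
    G.IsCompleteMultipartite' := by
  intro x y z hxy hyz
  intro hxz
  have nxy : x ≠ y := fun h => hyz (h ▸ hxz)
  have nyz : y ≠ z := fun h => hxy (h ▸ hxz)
  obtain ⟨p, q, hxp, hxq, hpq⟩ : ∃ p q, G.Adj x p ∧ G.Adj x q ∧ G.Adj p q := by
    rcases mem_or_two_adj hG hc hab hac hbc x with rfl | rfl | rfl | ⟨h1, h2⟩ | ⟨h1, h2⟩ | ⟨h1, h2⟩
    · exact ⟨b, c, hab, hac, hbc⟩
    · exact ⟨a, c, hab.symm, hbc, hac⟩
    · exact ⟨a, b, hac.symm, hbc.symm, hab⟩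
    · exact ⟨a, b, h1, h2, hab⟩
    · exact ⟨a, c, h1, h2, hac⟩
    · exact ⟨b, c, h1, h2, hbc⟩
  obtain ⟨w, hxw, hzw⟩ : ∃ w, G.Adj x w ∧ G.Adj z w := by
    by_cases hzp : z = p
    · exact ⟨q, hxq, hzp ▸ hpq⟩
    by_cases hzq : z = q
    · exact ⟨p, hxp, hzq ▸ hpq.symm⟩
    · rcases two_of_triangle hG hxp hxq hpq hxz.symm hzp hzq with h | h
      · exact ⟨p, hxp, h⟩
      · exact ⟨q, hxq, h⟩
  rcases mem_or_two_adj hG hc hxz hxw hzw y with rfl | rfl | rfl | ⟨h1, _⟩ | ⟨h1, _⟩ | ⟨h1, _⟩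
  · exact nxy rfl
  · exact nyz rfl
  · exact hxy hxw
  · exact hxy h1.symm
  · exact hxy h1.symm
  · exact hyz h1

/-- Induced subgraph of an induced subgraph is an induced subgraph. -/
noncomputable def induceInduceIso {V : Type*} (G : SimpleGraph V) (A : Set V) (S : Set ↥A) :
    (G.induce A).induce S ≃g G.induce (Subtype.val '' S) where
  toEquiv := Equiv.Set.image Subtype.val S Subtype.val_injective
  map_rel_iff' := Iff.rfl

/-- Paw-freeness is inherited by induced subgraphs. -/
lemma SimpleGraph.PawFree.induce {V : Type*} {G : SimpleGraph V} (h : G.PawFree) (A : Set V) :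
    (G.induce A).PawFree := by
  rintro ⟨S, ⟨iso⟩⟩
  exact h ⟨Subtype.val '' S, ⟨iso.comp (induceInduceIso G A S).symm⟩⟩

/-- The induced graph on a connected component is connected. -/
lemma connected_induce_supp {V : Type*} {G : SimpleGraph V} (c : G.ConnectedComponent) :
    (G.induce c.supp).Connected := by
  rw [connected_induce_iff, Subgraph.connected_iff_forall_exists_walk_subgraph]
  constructor
  · obtain ⟨v, rfl⟩ := c.exists_rep
    exact ⟨v, rfl⟩
  · intro u v hu hv
    simp only [Subgraph.induce_verts, ConnectedComponent.mem_supp_iff] at hu hv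
    have hr : G.Reachable u v := ConnectedComponent.exact (hu.trans hv.symm)
    obtain ⟨p⟩ := hr
    refine ⟨p, le_trans p.toSubgraph_le_induce_support (Subgraph.induce_mono_right ?_)⟩
    classical
    intro w hw
    have : G.Reachable u w := ⟨p.takeUntil w hw⟩
    simp only [ConnectedComponent.mem_supp_iff, ← hu]
    exact (ConnectedComponent.sound this).symm

/-- Glue colorings of the components. -/
lemma colorable_of_components {V : Type*} {G : SimpleGraph V} {n : ℕ}
    (h : ∀ c : G.ConnectedComponent, (G.induce c.supp).Colorable n) : G.Colorable n := by
  have C : ∀ c : G.ConnectedComponent, (G.induce c.supp).Coloring (Fin n) :=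
    fun c => (h c).some
  let f : V → Fin n := fun v => C (G.connectedComponentMk v) ⟨v, rfl⟩
  have key : ∀ (c : G.ConnectedComponent) (w : V) (hw : w ∈ c.supp), f w = C c ⟨w, hw⟩ := by
    intro c w hw
    have hc : G.connectedComponentMk w = c := hw
    subst hc
    rfl
  refine ⟨Coloring.mk f ?_⟩
  intro u v hadj
  have hcc : G.connectedComponentMk v = G.connectedComponentMk u :=
    ConnectedComponent.sound hadj.reachable.symm
  rw [key (G.connectedComponentMk u) u rfl, key (G.connectedComponentMk u) v hcc]
  exact (C _).valid hadj

/-- A finite complete multipartite graph is colorable with its clique number of colors. -/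
lemma SimpleGraph.IsCompleteMultipartite'.colorable_cliqueNum {V : Type*} [Fintype V]
    {G : SimpleGraph V} (h : G.IsCompleteMultipartite') : G.Colorable G.cliqueNum := by
  classical
  let s : Setoid V := ⟨fun v w => ¬ G.Adj v w,
    ⟨fun v => G.loopless.irrefl v, fun h' a => h' a.symm, fun h1 h2 => h h1 h2⟩⟩
  let C : G.Coloring (Quotient s) := Coloring.mk (Quotient.mk s) (by
    intro u v hadj huv
    exact Quotient.exact huv hadj)
  have hcol : G.Colorable (Fintype.card (Quotient s)) := C.colorable
  refine hcol.mono ?_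
  have hinj : Function.Injective (Quotient.out : Quotient s → V) := Quotient.out_injective
  have hclique : G.IsClique ((Finset.univ.image (Quotient.out : Quotient s → V)) : Finset V) := by
    intro x hx y hy hxy
    simp only [Finset.coe_image, Finset.coe_univ, Set.image_univ, Set.mem_range] at hx hy
    obtain ⟨q1, rfl⟩ := hx
    obtain ⟨q2, rfl⟩ := hy
    by_contra hadj
    exact hxy (congrArg Quotient.out (by
      rw [← Quotient.out_eq q1, ← Quotient.out_eq q2]
      exact Quotient.sound hadj))
  have := hclique.card_le_cliqueNum
  rwa [Finset.card_image_of_injective _ hinj, Finset.card_univ] at this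

/-- Clique number of an induced subgraph is at most the clique number. -/
lemma cliqueNum_induce_le_s6 {V : Type*} [Fintype V] (G : SimpleGraph V) (A : Set V) :
    haveI : Fintype ↥A := Fintype.ofFinite ↥A
    (G.induce A).cliqueNum ≤ G.cliqueNum := by
  haveI : Fintype ↥A := Fintype.ofFinite ↥A
  classical
  obtain ⟨s, hs⟩ := (G.induce A).exists_isNClique_cliqueNum
  have hclique : G.IsClique (s.image Subtype.val) := by
    intro x hx y hy hxy
    simp only [Finset.coe_image, Set.mem_image, Finset.mem_coe] at hx hy
    obtain ⟨u, hu, rfl⟩ := hx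
    obtain ⟨w, hw, rfl⟩ := hy
    exact hs.isClique hu hw (fun h => hxy (congrArg _ h))
  have := hclique.card_le_cliqueNum
  rwa [Finset.card_image_of_injective _ Subtype.val_injective, hs.card_eq] at this

/-- The clique number is a lower bound on the chromatic number. -/
lemma cliqueNum_le_chromaticNumber {V : Type*} [Fintype V] (G : SimpleGraph V) :
    (G.cliqueNum : ℕ∞) ≤ G.chromaticNumber := by
  obtain ⟨s, hs⟩ := G.exists_isNClique_cliqueNum
  have h1 : s.card ≤ G.chromaticNumber.toNat :=
    hs.isClique.card_le_of_colorable G.colorable_chromaticNumber_of_fintype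
  have hne : G.chromaticNumber ≠ ⊤ := by
    rw [chromaticNumber_ne_top_iff_exists]
    exact ⟨Fintype.card V, G.colorable_of_fintype⟩
  rw [← hs.card_eq, ← ENat.coe_toNat hne]
  exact_mod_cast h1

/-- If each component of a finite graph is bipartite or complete multipartite, then
its chromatic number equals its clique number. -/
lemma chromaticNumber_eq_of_components {W : Type*} [Fintype W] (H : SimpleGraph W)
    (h : ∀ c : H.ConnectedComponent,
      (H.induce c.supp).Colorable 2 ∨ (H.induce c.supp).IsCompleteMultipartite') :
    H.chromaticNumber = (H.cliqueNum : ℕ∞) := by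
  refine le_antisymm ?_ (cliqueNum_le_chromaticNumber H)
  rw [chromaticNumber_le_iff_colorable]
  apply colorable_of_components
  intro c
  haveI : Fintype ↥c.supp := Fintype.ofFinite _
  have h1 : 1 ≤ H.cliqueNum := by
    obtain ⟨v, rfl⟩ := c.exists_rep
    have : H.IsClique ({v} : Finset W) := by simp
    simpa using this.card_le_cliqueNum
  rcases h c with hcol | hmp
  · by_cases hedge : ∃ u v : ↥c.supp, (H.induce c.supp).Adj u v
    · obtain ⟨u, v, huv⟩ := hedge
      have hne : (u : W) ≠ (v : W) := by
        intro hh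
        exact (H.induce c.supp).loopless.irrefl u (by rwa [← Subtype.ext hh] at huv)
      have h2 : 2 ≤ H.cliqueNum := by
        classical
        have hcl : H.IsClique ({(u : W), (v : W)} : Finset W) := by
          rw [Finset.coe_insert, Finset.coe_singleton]
          haveI : Std.Symm H.Adj := ⟨fun a b h => h.symm⟩
          exact Set.pairwise_pair_of_symm |>.mpr (fun _ => huv)
        have := hcl.card_le_cliqueNum
        rwa [Finset.card_insert_of_notMem (by simp [hne]), Finset.card_singleton] at this
      exact hcol.mono h2
    · push_neg at hedge
      refine (Colorable.mono h1 ?_)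
      exact ⟨Coloring.mk (fun _ => 0) (fun hadj => absurd hadj (hedge _ _))⟩
  · exact (hmp.colorable_cliqueNum).mono (cliqueNum_induce_le_s6 H c.supp)

/-- Complete multipartiteness transfers along graph embeddings. -/
lemma SimpleGraph.IsCompleteMultipartite'.of_embedding {V W : Type*} {G : SimpleGraph V}
    {H : SimpleGraph W} (f : G ↪g H) (h : H.IsCompleteMultipartite') :
    G.IsCompleteMultipartite' := by
  intro x y z hxy hyz hxz
  exact h (fun a => hxy (f.map_adj_iff.mp a)) (fun a => hyz (f.map_adj_iff.mp a))
    (f.map_adj_iff.mpr hxz)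

lemma good_of_embedding {V W : Type*} {G : SimpleGraph V} {H : SimpleGraph W} (f : G ↪g H)
    (h : H.Colorable 2 ∨ H.IsCompleteMultipartite') :
    G.Colorable 2 ∨ G.IsCompleteMultipartite' :=
  h.imp (Colorable.of_hom f.toHom) (IsCompleteMultipartite'.of_embedding f)

/-- Components of induced subgraphs inherit the component property. -/
lemma components_induce {V : Type*} (G : SimpleGraph V)
    (h : ∀ c : G.ConnectedComponent,
      (G.induce c.supp).Colorable 2 ∨ (G.induce c.supp).IsCompleteMultipartite')
    (S : Set V) (d : (G.induce S).ConnectedComponent) :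
    ((G.induce S).induce d.supp).Colorable 2 ∨
      ((G.induce S).induce d.supp).IsCompleteMultipartite' := by
  obtain ⟨v₀, rfl⟩ := d.exists_rep
  set c : G.ConnectedComponent := G.connectedComponentMk (v₀ : V) with hc
  have hT : Subtype.val '' ((G.induce S).connectedComponentMk v₀).supp ≤ c.supp := by
    rintro w ⟨u, hu, rfl⟩
    have hu' : (G.induce S).connectedComponentMk u = (G.induce S).connectedComponentMk v₀ := hu
    have hru : (G.induce S).Reachable u v₀ := ConnectedComponent.exact hu'
    have : G.Reachable (u : V) (v₀ : V) := hru.map (Embedding.induce S).toHom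
    exact ConnectedComponent.sound this
  exact good_of_embedding
    (Embedding.comp (G.induceHomOfLE hT) (induceInduceIso G S _).toEmbedding) (h c)

end Aux

/-- A graph is perfect and paw-free iff each of its connected components is
bipartite or complete multipartite. -/
theorem isPerfect_and_pawFree_iff_components {V : Type*} [Fintype V]
    (G : SimpleGraph V) :
    G.IsPerfect ∧ G.PawFree ↔
      ∀ c : G.ConnectedComponent,
        (G.induce c.supp).Colorable 2 ∨ (G.induce c.supp).IsCompleteMultipartite' := by
  constructor
  · rintro ⟨hP, hPF⟩ c
    haveI : Fintype ↥c.supp := Fintype.ofFinite _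
    by_cases htri : ∃ x y z : ↥c.supp, (G.induce c.supp).Adj x y ∧ (G.induce c.supp).Adj x z ∧
        (G.induce c.supp).Adj y z
    · obtain ⟨x, y, z, h1, h2, h3⟩ := htri
      exact Or.inr (olariu (hPF.induce c.supp) (connected_induce_supp c) h1 h2 h3)
    · left
      have hω : (G.induce c.supp).cliqueNum ≤ 2 := by
        classical
        obtain ⟨s, hs⟩ := (G.induce c.supp).exists_isNClique_cliqueNum
        rw [← hs.card_eq]
        by_contra hlt
        push_neg at hlt
        obtain ⟨t, hts, hcard⟩ := Finset.exists_subset_card_eq hlt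
        rw [Finset.card_eq_three] at hcard
        obtain ⟨x, y, z, hxy, hxz, hyz, rfl⟩ := hcard
        exact htri ⟨x, y, z,
          hs.isClique (hts (by simp)) (hts (by simp)) hxy,
          hs.isClique (hts (by simp)) (hts (by simp)) hxz,
          hs.isClique (hts (by simp)) (hts (by simp)) hyz⟩
      rw [← chromaticNumber_le_iff_colorable, hP c.supp]
      exact_mod_cast hω
  · intro hcomps
    constructor
    · intro S
      haveI : Fintype ↥S := Fintype.ofFinite _
      exact chromaticNumber_eq_of_components _ (components_induce G hcomps S)
    · rintro ⟨S, ⟨iso⟩⟩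
      let g := iso.symm
      let v : Fin 4 → V := fun i => ((g i : ↥S) : V)
      have hadj : ∀ i j, G.Adj (v i) (v j) ↔ pawGraph.Adj i j := fun i j => g.map_adj_iff
      have h01 : G.Adj (v 0) (v 1) := (hadj 0 1).mpr ((pawGraph_adj_iff 0 1).mpr (by simp))
      have h02 : G.Adj (v 0) (v 2) := (hadj 0 2).mpr ((pawGraph_adj_iff 0 2).mpr (by simp))
      have h12 : G.Adj (v 1) (v 2) := (hadj 1 2).mpr ((pawGraph_adj_iff 1 2).mpr (by simp))
      have h23 : G.Adj (v 2) (v 3) := (hadj 2 3).mpr ((pawGraph_adj_iff 2 3).mpr (by simp))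
      have hn03 : ¬ G.Adj (v 0) (v 3) := fun h => by
        have := (pawGraph_adj_iff 0 3).mp ((hadj 0 3).mp h)
        simp at this
      have hn13 : ¬ G.Adj (v 1) (v 3) := fun h => by
        have := (pawGraph_adj_iff 1 3).mp ((hadj 1 3).mp h)
        simp at this
      set c : G.ConnectedComponent := G.connectedComponentMk (v 2) with hc
      have m0 : v 0 ∈ c.supp := ConnectedComponent.sound h02.reachable
      have m1 : v 1 ∈ c.supp := ConnectedComponent.sound h12.reachable
      have m2 : v 2 ∈ c.supp := rfl
      have m3 : v 3 ∈ c.supp := ConnectedComponent.sound h23.symm.reachable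
      rcases hcomps c with hcol | hmp
      · obtain ⟨C⟩ := hcol
        have d01 : C ⟨v 0, m0⟩ ≠ C ⟨v 1, m1⟩ := C.valid h01
        have d02 : C ⟨v 0, m0⟩ ≠ C ⟨v 2, m2⟩ := C.valid h02
        have d12 : C ⟨v 1, m1⟩ ≠ C ⟨v 2, m2⟩ := C.valid h12
        have e01 : (C ⟨v 0, m0⟩).val ≠ (C ⟨v 1, m1⟩).val := fun h => d01 (Fin.ext h)
        have e02 : (C ⟨v 0, m0⟩).val ≠ (C ⟨v 2, m2⟩).val := fun h => d02 (Fin.ext h)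
        have e12 : (C ⟨v 1, m1⟩).val ≠ (C ⟨v 2, m2⟩).val := fun h => d12 (Fin.ext h)
        have l0 := (C ⟨v 0, m0⟩).isLt
        have l1 := (C ⟨v 1, m1⟩).isLt
        have l2 := (C ⟨v 2, m2⟩).isLt
        omega
      · exact hmp (x := ⟨v 0, m0⟩) (y := ⟨v 3, m3⟩) (z := ⟨v 1, m1⟩)
          (fun h => hn03 h) (fun h => hn13 h.symm) h01
end

section
/- If a simple graph G is perfect and paw-free, then every connected component of G is bipartite or complete multipartite. -/
open SimpleGraph in
lemma paw_of {V : Type*} (G : SimpleGraph V) {a b c d : V}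
    (hab : G.Adj a b) (hac : G.Adj a c) (hbc : G.Adj b c) (hcd : G.Adj c d)
    (had : ¬ G.Adj a d) (hbd : ¬ G.Adj b d) (had' : a ≠ d) (hbd' : b ≠ d) :
    ∃ S : Set V, Nonempty (G.induce S ≃g pawGraph) := by
  classical
  have hcd' : c ≠ d := hcd.ne
  have hab' : a ≠ b := hab.ne
  have hac' : a ≠ c := hac.ne
  have hbc' : b ≠ c := hbc.ne
  have hda : ¬ G.Adj d a := fun h => had h.symm
  have hdb : ¬ G.Adj d b := fun h => hbd h.symm
  refine ⟨{a, b, c, d}, ⟨?_⟩⟩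
  set S : Set V := {a, b, c, d} with hS
  have ha : a ∈ S := by simp [hS]
  have hb : b ∈ S := by simp [hS]
  have hc : c ∈ S := by simp [hS]
  have hd : d ∈ S := by simp [hS]
  let f : Fin 4 → S := ![⟨a, ha⟩, ⟨b, hb⟩, ⟨c, hc⟩, ⟨d, hd⟩]
  have hinj : Function.Injective f := by
    intro i j hij
    fin_cases i <;> fin_cases j <;> simp_all [f, Subtype.ext_iff] <;>
      first
      | rfl
      | (exfalso; first
          | exact hab' hij | exact hac' hij | exact had' hij
          | exact hbc' hij | exact hbd' hij | exact hcd' hij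
          | exact hab' hij.symm | exact hac' hij.symm | exact had' hij.symm
          | exact hbc' hij.symm | exact hbd' hij.symm | exact hcd' hij.symm)
  have hsurj : Function.Surjective f := by
    rintro ⟨x, hx⟩
    rcases hx with rfl | rfl | rfl | rfl
    · exact ⟨0, rfl⟩
    · exact ⟨1, rfl⟩
    · exact ⟨2, rfl⟩
    · exact ⟨3, rfl⟩
  have hiso : pawGraph ≃g G.induce S := by
    refine { toEquiv := Equiv.ofBijective f ⟨hinj, hsurj⟩, map_rel_iff' := ?_ }
    intro i j
    show (G.induce S).Adj (f i) (f j) ↔ pawGraph.Adj i j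
    fin_cases i <;> fin_cases j <;>
      simp [f, pawGraph, SimpleGraph.fromEdgeSet_adj, Sym2.eq_iff,
        hab, hac, hbc, hcd, hab.symm, hac.symm, hbc.symm, hcd.symm,
        had, hbd, hda, hdb] <;> decide
  exact hiso.symm

open SimpleGraph

/-- In a paw-free graph, a neighbor of a triangle vertex is adjacent to
another triangle vertex. -/
lemma adj_two {V : Type*} {G : SimpleGraph V} (hf : G.PawFree) {a b c v : V}
    (hab : G.Adj a b) (hac : G.Adj a c) (hbc : G.Adj b c) (hva : G.Adj v a) :
    G.Adj v b ∨ G.Adj v c := by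
  by_contra h
  push_neg at h
  obtain ⟨hvb, hvc⟩ := h
  have hbv : b ≠ v := by rintro rfl; exact hvc hbc
  have hcv : c ≠ v := by rintro rfl; exact hvb hbc.symm
  exact hf (paw_of G hbc hab.symm hac.symm hva.symm
    (fun h => hvb h.symm) (fun h => hvc h.symm) hbv hcv)

lemma walk_ind {V : Type*} {G : SimpleGraph V} (P : V → Prop)
    (step : ∀ x y, G.Adj x y → P x → P y) {u v : V} (h : G.Reachable u v)
    (hu : P u) : P v := by
  obtain ⟨w⟩ := h
  induction w with
  | nil => exact hu
  | cons h' p ih => exact ih (step _ _ h' hu)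

/-- pendant at a triangle gives a paw -/
lemma no_pendant {V : Type*} {G : SimpleGraph V} (hf : G.PawFree) {t1 t2 z z' : V}
    (h12 : G.Adj t1 t2) (h1 : G.Adj z t1) (h2 : G.Adj z t2) (hz : G.Adj z z')
    (n1 : ¬ G.Adj z' t1) (n2 : ¬ G.Adj z' t2) (e1 : z' ≠ t1) (e2 : z' ≠ t2) :
    False :=
  hf (paw_of G h12 h1.symm h2.symm hz (fun h => n1 h.symm) (fun h => n2 h.symm)
    (fun h => e1 h.symm) (fun h => e2 h.symm))

/-- in a paw-free graph, being in a triangle propagates along edges -/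
lemma in_tri_step {V : Type*} {G : SimpleGraph V} (hf : G.PawFree) {x y : V}
    (h : G.Adj x y) (hx : ∃ p q, G.Adj x p ∧ G.Adj x q ∧ G.Adj p q) :
    ∃ p q, G.Adj y p ∧ G.Adj y q ∧ G.Adj p q := by
  obtain ⟨p, q, hxp, hxq, hpq⟩ := hx
  rcases adj_two hf hxp hxq hpq h.symm with hyp | hyq
  · exact ⟨x, p, h.symm, hyp, hxp⟩
  · exact ⟨x, q, h.symm, hyq, hxq⟩


/-- If a graph is perfect and paw-free, then each connected component is
bipartite or complete multipartite. -/
theorem components_of_isPerfect_and_pawFree {V : Type*} [Fintype V]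
    (G : SimpleGraph V) (hp : G.IsPerfect) (hf : G.PawFree) :
    ∀ c : G.ConnectedComponent,
      (G.induce c.supp).Colorable 2 ∨ (G.induce c.supp).IsCompleteMultipartite' := by
  classical
  intro c
  by_cases ht : ∃ x y z : V, x ∈ c.supp ∧ G.Adj x y ∧ G.Adj x z ∧ G.Adj y z
  · -- complete multipartite
    right
    rintro ⟨u, hu⟩ ⟨v, hv⟩ ⟨w, hw⟩ huv hvw huw
    simp only [comap_adj, Function.Embedding.coe_subtype] at huv hvw huw
    -- huv : ¬ G.Adj u v, hvw : ¬ G.Adj v w, huw : G.Adj u w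
    by_cases huv' : u = v
    · exact hvw (huv' ▸ huw)
    by_cases hvw' : v = w
    · exact huv (hvw' ▸ huw)
    -- get a triangle through u
    obtain ⟨x, y, z, hx, hxy, hxz, hyz⟩ := ht
    have hreach : G.Reachable x u := by
      rw [ConnectedComponent.mem_supp_iff] at hx hu
      exact ConnectedComponent.exact (hx.trans hu.symm)
    have hIT : ∃ p q, G.Adj u p ∧ G.Adj u q ∧ G.Adj p q :=
      walk_ind _ (fun _ _ h => in_tri_step hf h) hreach ⟨y, z, hxy, hxz, hyz⟩
    obtain ⟨p, q, hup, huq, hpq⟩ := hIT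
    -- w adjacent to u, so w adjacent to p or q; get triangle u w x0
    obtain ⟨x0, hux0, hwx0⟩ :
        ∃ x0, G.Adj u x0 ∧ G.Adj w x0 := by
      rcases adj_two hf hup huq hpq huw.symm with h | h
      · exact ⟨p, hup, h⟩
      · exact ⟨q, huq, h⟩
    have huw' : G.Adj u w := huw
    -- v is not adjacent to x0 and distinct from everything
    have hvx0 : ¬ G.Adj v x0 := fun h =>
      no_pendant hf huw' hux0.symm hwx0.symm h.symm
        (fun h' => huv h'.symm) (fun h' => hvw h') (Ne.symm huv') hvw'
    have hvx0' : v ≠ x0 := by rintro rfl; exact huv hux0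
    -- propagate "close to triangle" along walks
    set P : V → Prop :=
      fun t => (t = u ∨ t = w ∨ t = x0) ∨ (G.Adj t u ∨ G.Adj t w ∨ G.Adj t x0)
      with hP
    have hstep : ∀ s t, G.Adj s t → P s → P t := by
      intro s t hst hPs
      by_cases hPt : P t
      · exact hPt
      exfalso
      simp only [hP, not_or] at hPt
      obtain ⟨⟨htu, htw, htx0⟩, ⟨ntu, ntw, ntx0⟩⟩ := hPt
      rcases hPs with (rfl | rfl | rfl) | hadj
      · exact ntu hst.symm
      · exact ntw hst.symm
      · exact ntx0 hst.symm
      rcases hadj with hsu | hsw | hsx0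
      · rcases adj_two hf huw' hux0 hwx0 hsu with h | h
        · exact no_pendant hf huw' hsu h hst ntu ntw htu htw
        · exact no_pendant hf hux0 hsu h hst ntu ntx0 htu htx0
      · rcases adj_two hf huw'.symm hwx0 hux0 hsw with h | h
        · exact no_pendant hf huw'.symm hsw h hst ntw ntu htw htu
        · exact no_pendant hf hwx0 hsw h hst ntw ntx0 htw htx0
      · rcases adj_two hf hux0.symm hwx0.symm huw' hsx0 with h | h
        · exact no_pendant hf hux0.symm hsx0 h hst ntx0 ntu htx0 htu
        · exact no_pendant hf hwx0.symm hsx0 h hst ntx0 ntw htx0 htw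
    have hreach2 : G.Reachable u v := by
      rw [ConnectedComponent.mem_supp_iff] at hu hv
      exact ConnectedComponent.exact (hu.trans hv.symm)
    have hPv : P v := walk_ind P hstep hreach2 (Or.inl (Or.inl rfl))
    rcases hPv with (rfl | rfl | rfl) | (h | h | h)
    · exact huv' rfl
    · exact hvw' rfl
    · exact huv hux0
    · exact huv h.symm
    · exact hvw h
    · exact hvx0 h
  · -- bipartite
    left
    have hfin : Fintype ↥c.supp := Fintype.ofFinite _
    rw [← SimpleGraph.chromaticNumber_le_iff_colorable, hp c.supp]
    have hclique : (G.induce c.supp).cliqueNum ≤ 2 := by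
      by_contra hle
      push_neg at hle
      obtain ⟨s, hs⟩ := (G.induce c.supp).exists_isNClique_cliqueNum
      have hcard : 3 ≤ s.card := by rw [hs.card_eq]; omega
      obtain ⟨t, hts, htcard⟩ := Finset.exists_subset_card_eq hcard
      rw [Finset.card_eq_three] at htcard
      obtain ⟨a, b, c', hab, hac, hbc, rfl⟩ := htcard
      have hA : ∀ x ∈ ({a, b, c'} : Finset ↥c.supp), x ∈ s := fun x hx => hts hx
      have h1 : (G.induce c.supp).Adj a b :=
        hs.isClique (hA a (by simp)) (hA b (by simp)) hab
      have h2 : (G.induce c.supp).Adj a c' :=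
        hs.isClique (hA a (by simp)) (hA c' (by simp)) hac
      have h3 : (G.induce c.supp).Adj b c' :=
        hs.isClique (hA b (by simp)) (hA c' (by simp)) hbc
      simp only [comap_adj, Function.Embedding.coe_subtype] at h1 h2 h3
      exact ht ⟨a, b, c', a.2, h1, h2, h3⟩
    exact_mod_cast Nat.cast_le.mpr hclique
end

section
/- Every complete multipartite simple graph is perfectly colorable; in particular, the proper coloring that assigns to each vertex the part containing it is a perfect coloring. -/
lemma key_perfect {V ι : Type*} [Fintype V]
    (G : SimpleGraph V) (p : V → ι) (hp : ∀ v w, G.Adj v w ↔ p v ≠ p w) :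
    G.IsPerfectColoring (SimpleGraph.Coloring.mk p fun h => (hp _ _).mp h) := by
  intro S _
  classical
  haveI : Fintype S := Fintype.ofFinite S
  have hfin : (p '' S).Finite := (S.toFinite).image p
  haveI : Fintype (p '' S) := hfin.fintype
  -- define section
  choose g hg1 hg2 using fun i : (p '' S) => i.2
  set g' : (p '' S) → S := fun i => ⟨g i, hg1 i⟩ with hg'
  have hginj : Function.Injective g' := by
    intro i j hij
    apply Subtype.ext
    rw [← hg2 i, ← hg2 j]
    simp only [hg'] at hij
    exact congrArg p (congrArg Subtype.val hij)
  apply le_antisymm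
  · -- (p '' S).ncard ≤ cliqueNum : build clique
    set s : Finset S := Finset.univ.image g' with hs
    have hclique : (G.induce S).IsClique (s : Set S) := by
      intro a ha b hb hab
      simp only [hs, Finset.coe_image, Set.mem_image] at ha hb
      obtain ⟨i, -, rfl⟩ := ha
      obtain ⟨j, -, rfl⟩ := hb
      have hij : i ≠ j := fun h => hab (congrArg g' h)
      show G.Adj (g i) (g j)
      rw [hp, hg2 i, hg2 j]
      exact fun h => hij (Subtype.ext h)
    have hcard : s.card = (p '' S).ncard := by
      rw [hs, Finset.card_image_of_injective _ hginj, Finset.card_univ,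
        ← Nat.card_coe_set_eq, Nat.card_eq_fintype_card]
    calc (p '' S).ncard = s.card := hcard.symm
      _ ≤ (G.induce S).cliqueNum := hclique.card_le_cliqueNum
  · -- cliqueNum ≤ ncard
    obtain ⟨s, hs⟩ := (G.induce S).exists_isNClique_cliqueNum
    have hinj : Set.InjOn (fun v : S => p v) (s : Set S) := by
      intro a ha b hb hab
      by_contra hne
      have := hs.1 ha hb hne
      rw [SimpleGraph.comap_adj] at this
      exact (hp _ _).mp this hab
    have : ((fun v : S => p v) '' (s : Set S)).ncard = s.card := by
      rw [Set.ncard_image_of_injOn hinj, Set.ncard_coe_finset]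
    rw [← hs.2, ← this]
    apply Set.ncard_le_ncard _ hfin
    rintro x ⟨v, -, rfl⟩
    exact ⟨v, v.2, rfl⟩

/-- Every complete multipartite graph is perfectly colorable; in particular,
the coloring assigning to each vertex its part is a perfect coloring.  Here the
parts are the fibers of `p`, and two vertices are adjacent iff they lie in
distinct parts. -/
theorem completeMultipartite_perfectlyColorable {V ι : Type*} [Fintype V]
    (G : SimpleGraph V) (p : V → ι) (hp : ∀ v w, G.Adj v w ↔ p v ≠ p w) :
    G.IsPerfectColoring (SimpleGraph.Coloring.mk p fun h => (hp _ _).mp h) ∧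
      G.PerfectlyColorable := by
  classical
  refine ⟨key_perfect G p hp, ?_⟩
  have hfin : (Set.range p).Finite := Set.finite_range p
  haveI : Fintype (Set.range p) := hfin.fintype
  obtain ⟨e⟩ : Nonempty (Set.range p ≃ Fin (Fintype.card (Set.range p))) :=
    ⟨Fintype.equivFin _⟩
  set q : V → Fin (Fintype.card (Set.range p)) :=
    fun v => e ⟨p v, Set.mem_range_self v⟩ with hq
  have hq' : ∀ v w, G.Adj v w ↔ q v ≠ q w := by
    intro v w
    rw [hp]
    constructor
    · intro h h'
      exact h (Subtype.ext_iff.mp (e.injective h'))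
    · intro h h'
      exact h (congrArg e (Subtype.ext h'))
  exact ⟨Fin _, SimpleGraph.Coloring.mk q fun h => (hq' _ _).mp h, key_perfect G q hq'⟩
end

section
/- If every connected component of a simple graph G is bipartite or complete multipartite, then G is perfectly colorable. -/
/-- If each connected component of a graph is bipartite or complete
multipartite, then the graph is perfectly colorable. -/
theorem perfectlyColorable_of_components {V : Type*} [Fintype V]
    (G : SimpleGraph V)
    (h : ∀ c : G.ConnectedComponent,
      (G.induce c.supp).Colorable 2 ∨ (G.induce c.supp).IsCompleteMultipartite') :
    G.PerfectlyColorable := by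
  classical
  obtain ⟨e, he⟩ := Countable.exists_injective_nat V
  obtain ⟨k, hk⟩ := Countable.exists_injective_nat G.ConnectedComponent
  -- the "part" of a vertex: vertices in the same component not adjacent to it
  set P : V → Set V :=
    fun v => {u | G.connectedComponentMk u = G.connectedComponentMk v ∧ ¬ G.Adj v u} with hP
  have hPself : ∀ v, v ∈ P v := fun v => ⟨rfl, G.irrefl⟩
  -- transitivity of non-adjacency inside a complete multipartite component
  have htrans : ∀ c : G.ConnectedComponent, (G.induce c.supp).IsCompleteMultipartite' →
      ∀ a b d : V, ∀ ha : a ∈ c.supp, ∀ hb : b ∈ c.supp, ∀ hd : d ∈ c.supp,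
      ¬ G.Adj a b → ¬ G.Adj b d → ¬ G.Adj a d := by
    intro c hm a b d ha hb hd hab hbd
    exact hm (show ¬ (G.induce c.supp).Adj ⟨a, ha⟩ ⟨b, hb⟩ from hab)
      (show ¬ (G.induce c.supp).Adj ⟨b, hb⟩ ⟨d, hd⟩ from hbd)
  have hsupp : ∀ (c : G.ConnectedComponent) (v : V), v ∈ c.supp ↔ G.connectedComponentMk v = c :=
    fun c v => SimpleGraph.ConnectedComponent.mem_supp_iff c v
  have hPincl : ∀ c : G.ConnectedComponent, (G.induce c.supp).IsCompleteMultipartite' →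
      ∀ v w : V, v ∈ c.supp → w ∈ c.supp → ¬ G.Adj v w → P v ⊆ P w := by
    intro c hm v w hv hw hnadj u hu
    rw [hP] at hu ⊢
    obtain ⟨hcu, hnu⟩ := hu
    have hus : u ∈ c.supp := by
      rw [hsupp, hcu, ← hsupp]; exact hv
    constructor
    · rw [hcu, (hsupp c v).mp hv, ((hsupp c w).mp hw)]
    · exact htrans c hm w v u hw hv hus (fun a => hnadj a.symm) hnu
  have hPeq : ∀ c : G.ConnectedComponent, (G.induce c.supp).IsCompleteMultipartite' →
      ∀ v w : V, v ∈ c.supp → w ∈ c.supp → ¬ G.Adj v w → P v = P w := by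
    intro c hm v w hv hw hnadj
    exact Set.Subset.antisymm (hPincl c hm v w hv hw hnadj)
      (hPincl c hm w v hw hv (fun a => hnadj a.symm))
  -- the coloring
  set F : G.ConnectedComponent → V → ℕ := fun c =>
    if hb : (G.induce c.supp).Colorable 2 then
      fun v => if hv : v ∈ c.supp then ((hb.some ⟨v, hv⟩ : Fin 2) : ℕ) else 0
    else fun v => sInf (e '' P v) with hF
  set f : V → ℕ × ℕ := fun v => (k (G.connectedComponentMk v), F (G.connectedComponentMk v) v)
    with hf
  have key : ∀ v w : V, G.Adj v w → f v ≠ f w := by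
    intro v w hadj hfeq
    have hc : G.connectedComponentMk v = G.connectedComponentMk w :=
      SimpleGraph.ConnectedComponent.sound hadj.reachable
    have hv : v ∈ (G.connectedComponentMk v).supp := (hsupp _ v).mpr rfl
    have hw : w ∈ (G.connectedComponentMk v).supp := (hsupp _ w).mpr hc.symm
    have h2 : F (G.connectedComponentMk v) v = F (G.connectedComponentMk v) w := by
      have h3 := congrArg Prod.snd hfeq
      rw [hf] at h3
      simp only [← hc] at h3
      exact h3
    by_cases hb : (G.induce (G.connectedComponentMk v).supp).Colorable 2
    · have hval : (hb.some ⟨v, hv⟩ : Fin 2) ≠ hb.some ⟨w, hw⟩ :=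
        hb.some.valid (show (G.induce (G.connectedComponentMk v).supp).Adj ⟨v, hv⟩ ⟨w, hw⟩
          from hadj)
      rw [hF] at h2
      simp only [dif_pos hb, dif_pos hv, dif_pos hw] at h2
      exact hval (Fin.val_injective h2)
    · have hm := (h _).resolve_left hb
      rw [hF] at h2
      simp only [dif_neg hb] at h2
      obtain ⟨u, hu, hue⟩ := Nat.sInf_mem (⟨e v, v, hPself v, rfl⟩ : (e '' P v).Nonempty)
      obtain ⟨u', hu', hue'⟩ := Nat.sInf_mem (⟨e w, w, hPself w, rfl⟩ : (e '' P w).Nonempty)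
      have huu : u = u' := he (by rw [hue, hue', h2])
      subst huu
      have hus : u ∈ (G.connectedComponentMk v).supp := by
        rw [hsupp, hu.1]
      exact htrans _ hm v u w hv hus hw hu.2 (fun a => hu'.2 a.symm) hadj
  refine ⟨ℕ × ℕ, SimpleGraph.Coloring.mk f (fun {v w} hadj => key v w hadj), ?_⟩
  intro S hconn
  haveI : Fintype ↥S := Fintype.ofFinite _
  show (f '' S).ncard = (G.induce S).cliqueNum
  obtain ⟨⟨v0, hv0⟩⟩ := hconn.nonempty
  have hSc : ∀ v ∈ S, G.connectedComponentMk v = G.connectedComponentMk v0 := by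
    intro v hv
    exact SimpleGraph.ConnectedComponent.sound
      ((hconn.preconnected ⟨v, hv⟩ ⟨v0, hv0⟩).map (SimpleGraph.Embedding.induce S).toHom)
  -- direction 1 : cliqueNum ≤ ncard
  obtain ⟨s, hs⟩ := SimpleGraph.exists_isNClique_cliqueNum (G := G.induce S)
  have hinj : Set.InjOn (fun x : ↥S => f x.val) ↑s := by
    intro x hx y hy hxy
    by_contra hne
    have hadj : (G.induce S).Adj x y := hs.1 hx hy hne
    exact key x.val y.val hadj hxy
  have h1 : (G.induce S).cliqueNum ≤ (f '' S).ncard := by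
    have hsub : (fun x : ↥S => f x.val) '' ↑s ⊆ f '' S := by
      rintro _ ⟨x, hx, rfl⟩
      exact ⟨x.val, x.property, rfl⟩
    calc (G.induce S).cliqueNum = (↑s : Set ↥S).ncard := by
          rw [Set.ncard_coe_finset, hs.2]
      _ = ((fun x : ↥S => f x.val) '' ↑s).ncard := (Set.ncard_image_of_injOn hinj).symm
      _ ≤ (f '' S).ncard := Set.ncard_le_ncard hsub (S.toFinite.image f)
  -- direction 2 : ncard ≤ cliqueNum
  have h2 : (f '' S).ncard ≤ (G.induce S).cliqueNum := by
    by_cases hb : (G.induce (G.connectedComponentMk v0).supp).Colorable 2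
    · -- bipartite component
      have himg : f '' S ⊆ {(k (G.connectedComponentMk v0), 0),
          (k (G.connectedComponentMk v0), 1)} := by
        rintro _ ⟨v, hv, rfl⟩
        have hcv := hSc v hv
        have hvs : v ∈ (G.connectedComponentMk v0).supp := (hsupp _ v).mpr hcv
        have hfv : f v = (k (G.connectedComponentMk v0),
            ((hb.some ⟨v, hvs⟩ : Fin 2) : ℕ)) := by
          rw [hf]
          simp only [hcv, hF, dif_pos hb, dif_pos hvs]
        rw [hfv]
        have hl : ((hb.some ⟨v, hvs⟩ : Fin 2) : ℕ) < 2 := (hb.some ⟨v, hvs⟩).isLt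
        interval_cases hx : ((hb.some ⟨v, hvs⟩ : Fin 2) : ℕ)
        · exact Set.mem_insert _ _
        · exact Set.mem_insert_of_mem _ rfl
      have hle2 : (f '' S).ncard ≤ 2 := by
        refine le_trans (Set.ncard_le_ncard himg (Set.toFinite _)) ?_
        refine le_trans (Set.ncard_insert_le _ _) ?_
        simp
      by_cases hss : S.Subsingleton
      · have hSeq : S = {v0} := hss.eq_singleton_of_mem hv0
        have : (f '' S).ncard = 1 := by
          rw [hSeq, Set.image_singleton, Set.ncard_singleton]
        rw [this]
        have hcl : (G.induce S).IsClique (↑({⟨v0, hv0⟩} : Finset ↥S) : Set ↥S) := by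
          simp [SimpleGraph.isClique_singleton]
        have := SimpleGraph.IsClique.card_le_cliqueNum (tc := hcl)
        simpa using this
      · obtain ⟨x, hx, y, hy, hxy⟩ := (Set.not_subsingleton_iff.mp hss)
        have hXY : (⟨x, hx⟩ : ↥S) ≠ ⟨y, hy⟩ := by
          simp [Subtype.ext_iff]; exact hxy
        obtain ⟨p⟩ := hconn.preconnected ⟨x, hx⟩ ⟨y, hy⟩
        have hedge : ∃ a b : ↥S, (G.induce S).Adj a b := by
          cases p with
          | nil => exact absurd rfl hXY
          | cons hadj q => exact ⟨_, _, hadj⟩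
        obtain ⟨a, b, hab⟩ := hedge
        have hcl : (G.induce S).IsClique (↑({a, b} : Finset ↥S) : Set ↥S) := by
          rw [Finset.coe_pair]
          exact SimpleGraph.isClique_pair.mpr (fun _ => hab)
        have hcard : ({a, b} : Finset ↥S).card = 2 := Finset.card_pair hab.ne
        have := SimpleGraph.IsClique.card_le_cliqueNum (tc := hcl)
        rw [hcard] at this
        exact le_trans hle2 this
    · -- complete multipartite component
      have hm := (h _).resolve_left hb
      have hfS : ∀ v ∈ S, f v = (k (G.connectedComponentMk v0), sInf (e '' P v)) := by
        intro v hv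
        have hcv := hSc v hv
        rw [hf]
        simp only [hcv, hF, dif_neg hb]
      have hiff : ∀ v ∈ S, ∀ w ∈ S, ¬ G.Adj v w → f v = f w := by
        intro v hv w hw hnadj
        rw [hfS v hv, hfS w hw]
        have hvs : v ∈ (G.connectedComponentMk v0).supp := (hsupp _ v).mpr (hSc v hv)
        have hws : w ∈ (G.connectedComponentMk v0).supp := (hsupp _ w).mpr (hSc w hw)
        rw [hPeq _ hm v w hvs hws hnadj]
      -- build a clique of size ncard (f '' S)
      set q : ↥S → ℕ × ℕ := fun x => f x.val with hq
      set t : Finset (ℕ × ℕ) := Finset.image q Finset.univ with ht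
      have hset : (↑t : Set (ℕ × ℕ)) = f '' S := by
        rw [ht, Finset.coe_image, Finset.coe_univ, Set.image_univ, hq]
        rw [← Set.image_eq_range]
      have hcard : (f '' S).ncard = t.card := by
        rw [← hset, Set.ncard_coe_finset]
      have hsec : ∀ x ∈ t, ∃ a : ↥S, q a = x := by
        intro x hx
        rw [ht, Finset.mem_image] at hx
        obtain ⟨a, _, ha⟩ := hx
        exact ⟨a, ha⟩
      choose g hg using hsec
      set s' : Finset ↥S := t.attach.image (fun x => g x.val x.property) with hs'
      have hginj : ∀ x ∈ t.attach, ∀ y ∈ t.attach,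
          g x.val x.property = g y.val y.property → x = y := by
        intro x _ y _ hgxy
        have : q (g x.val x.property) = q (g y.val y.property) := by rw [hgxy]
        rw [hg x.val x.property, hg y.val y.property] at this
        exact Subtype.ext this
      have hs'card : s'.card = t.card := by
        rw [hs', Finset.card_image_of_injOn (fun x hx y hy => hginj x hx y hy),
          Finset.card_attach]
      have hcl : (G.induce S).IsClique (↑s' : Set ↥S) := by
        intro a ha b hb' hne
        rw [hs', Finset.coe_image] at ha hb'
        obtain ⟨x, _, rfl⟩ := ha
        obtain ⟨y, hy, rfl⟩ := hb'
        by_contra hnadj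
        have hnadj' : ¬ G.Adj (g x.val x.property).val (g y.val y.property).val := hnadj
        have hfeq := hiff _ (g x.val x.property).property _ (g y.val y.property).property hnadj'
        have : q (g x.val x.property) = q (g y.val y.property) := hfeq
        rw [hg, hg] at this
        have hxy : x = y := Subtype.ext this
        exact hne (by rw [hxy])
      have := SimpleGraph.IsClique.card_le_cliqueNum (tc := hcl)
      rw [hs'card] at this
      rw [hcard]
      exact this
  exact le_antisymm h2 h1
end

section
/- If a simple graph G is perfect and paw-free, then G is perfectly colorable. -/
section AuxLemmas

lemma pawGraph_adj (i j : Fin 4) : pawGraph.Adj i j ↔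
    (i = 0 ∧ j = 1) ∨ (i = 1 ∧ j = 0) ∨ (i = 0 ∧ j = 2) ∨ (i = 2 ∧ j = 0) ∨
    (i = 1 ∧ j = 2) ∨ (i = 2 ∧ j = 1) ∨ (i = 2 ∧ j = 3) ∨ (i = 3 ∧ j = 2) := by
  simp only [pawGraph, SimpleGraph.fromEdgeSet_adj, Set.mem_insert_iff, Set.mem_singleton_iff,
    Sym2.eq_iff]
  fin_cases i <;> fin_cases j <;> decide

/-- If `G` contains vertices forming a paw (triangle `a b c` with pendant `d` at `c`),
then `G` is not paw-free. -/
lemma paw_of_pattern {V : Type*} {G : SimpleGraph V} {a b c d : V}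
    (hab : G.Adj a b) (hac : G.Adj a c) (hbc : G.Adj b c) (hcd : G.Adj c d)
    (had : ¬ G.Adj a d) (hbd : ¬ G.Adj b d) (hda : d ≠ a) (hdb : d ≠ b)
    (hpf : G.PawFree) : False := by
  apply hpf
  refine ⟨{a, b, c, d}, ?_⟩
  have hS : ∀ x ∈ ({a, b, c, d} : Set V), x = a ∨ x = b ∨ x = c ∨ x = d := by
    intro x hx; simpa using hx
  have hne_ab : a ≠ b := hab.ne
  have hne_ac : a ≠ c := hac.ne
  have hne_bc : b ≠ c := hbc.ne
  have hne_cd : c ≠ d := hcd.ne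
  have had' : ¬ G.Adj d a := fun h => had h.symm
  have hbd' : ¬ G.Adj d b := fun h => hbd h.symm
  let f : Fin 4 → ({a, b, c, d} : Set V) := ![⟨a, by simp⟩, ⟨b, by simp⟩, ⟨c, by simp⟩, ⟨d, by simp⟩]
  have hinj : Function.Injective f := by
    intro i j hij
    fin_cases i <;> fin_cases j <;> simp_all [f]
  have hsurj : Function.Surjective f := by
    rintro ⟨x, hx⟩
    rcases hS x hx with rfl | rfl | rfl | rfl
    · exact ⟨0, rfl⟩
    · exact ⟨1, rfl⟩
    · exact ⟨2, rfl⟩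
    · exact ⟨3, rfl⟩
  let e : Fin 4 ≃ ({a, b, c, d} : Set V) := Equiv.ofBijective f ⟨hinj, hsurj⟩
  have hiso : pawGraph ≃g G.induce ({a, b, c, d} : Set V) := by
    refine ⟨e, ?_⟩
    intro i j
    show (G.induce _).Adj (f i) (f j) ↔ pawGraph.Adj i j
    fin_cases i <;> fin_cases j <;>
      simp [f, pawGraph_adj, hab, hac, hbc, hcd, had, hbd, hab.symm, hac.symm, hbc.symm,
        hcd.symm, had', hbd', G.irrefl]
  exact ⟨hiso.symm⟩


section Olariu

variable {V : Type*} {G : SimpleGraph V}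

/-- `v` lies in a triangle. -/
def InTri (G : SimpleGraph V) (v : V) : Prop :=
  ∃ b c, G.Adj v b ∧ G.Adj v c ∧ G.Adj b c

/-- In a paw-free graph, a neighbor of a triangle vertex has a common neighbor with it. -/
lemma common_nbr (hpf : G.PawFree) {x w : V} (hx : InTri G x) (hxw : G.Adj x w) :
    ∃ s, G.Adj x s ∧ G.Adj w s := by
  obtain ⟨b, c, hxb, hxc, hbc⟩ := hx
  by_cases hwb : w = b
  · exact ⟨c, hxc, hwb ▸ hbc⟩
  by_cases hwc : w = c
  · exact ⟨b, hxb, hwc ▸ hbc.symm⟩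
  by_cases h1 : G.Adj w b
  · exact ⟨b, hxb, h1⟩
  by_cases h2 : G.Adj w c
  · exact ⟨c, hxc, h2⟩
  -- paw: triangle b c x, pendant w at x
  exact (paw_of_pattern hbc hxb.symm hxc.symm hxw
    (fun h => h1 h.symm) (fun h => h2 h.symm) hwb hwc hpf).elim

lemma inTri_of_adj (hpf : G.PawFree) {x w : V} (hx : InTri G x) (hxw : G.Adj x w) :
    InTri G w := by
  obtain ⟨s, hxs, hws⟩ := common_nbr hpf hx hxw
  exact ⟨x, s, hxw.symm, hws, hxs⟩

lemma inTri_of_reachable (hpf : G.PawFree) {x w : V} (hx : InTri G x) (h : G.Reachable x w) :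
    InTri G w := by
  obtain ⟨p⟩ := h
  induction p with
  | nil => exact hx
  | cons h q ih => exact ih (inTri_of_adj hpf hx h)

/-- endgame of Olariu's argument -/
lemma endgame (hpf : G.PawFree) {x z s y u : V}
    (hxz : G.Adj x z) (hxs : G.Adj x s) (hzs : G.Adj z s)
    (hux : G.Adj u x) (huz : ¬ G.Adj u z) (hyu : G.Adj y u)
    (hyx : ¬ G.Adj y x) (hyz : ¬ G.Adj y z) : False := by
  have huz' : u ≠ z := fun h => hyz (h ▸ hyu)
  have hus' : u ≠ s := fun h => huz (h ▸ hzs.symm)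
  have hus : G.Adj u s := by
    by_contra hus
    -- paw: triangle z s x, pendant u at x
    exact paw_of_pattern hzs hxz.symm hxs.symm hux.symm (fun h => huz h.symm)
      (fun h => hus h.symm) huz' hus' hpf
  have hyx' : y ≠ x := fun h => hyz (h ▸ hxz)
  have hyz' : y ≠ z := fun h => hyx (h ▸ hxz.symm)
  have hys' : y ≠ s := fun h => hyx (h ▸ hxs.symm)
  have hys : G.Adj y s := by
    by_contra hys
    -- paw: triangle x s u, pendant y at u
    exact paw_of_pattern hxs hux.symm hus.symm hyu.symm (fun h => hyx h.symm)
      (fun h => hys h.symm) hyx' hys' hpf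
  -- paw: triangle x z s, pendant y at s
  exact paw_of_pattern hxz hxs hzs hys.symm (fun h => hyx h.symm)
    (fun h => hyz h.symm) hyx' hyz' hpf

lemma key_walk (hpf : G.PawFree) {z s : V} (hzs : G.Adj z s) :
    ∀ (y x : V), G.Walk y x → G.Adj x z → G.Adj x s → ¬ G.Adj y x → ¬ G.Adj y z → False := by
  intro y x p
  induction p with
  | nil => intro hxz _ _ hyz; exact hyz hxz
  | @cons a b c' h q ih =>
    intro hxz hxs hyx hyz
    by_cases h1x : G.Adj b c' <;> by_cases h1z : G.Adj b z
    · -- paw: triangle c' z b, pendant a at b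
      have hyx' : a ≠ c' := fun hh => hyz (hh ▸ hxz)
      have hyz' : a ≠ z := fun hh => hyx (hh ▸ hxz.symm)
      exact paw_of_pattern hxz h1x.symm h1z.symm h.symm (fun hh => hyx hh.symm)
        (fun hh => hyz hh.symm) hyx' hyz' hpf
    · exact endgame hpf hxz hxs hzs h1x h1z h hyx hyz
    · exact endgame hpf hxz.symm hzs hxs h1z h1x h hyz hyx
    · exact ih hxz hxs h1x h1z

/-- Olariu: in a paw-free graph, within a component containing a triangle,
non-adjacency is transitive. -/
lemma olariu_s12 (hpf : G.PawFree) {x y z : V} (hreach : G.Reachable y x)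
    (htri : InTri G x) (hyx : ¬ G.Adj x y) (hyz : ¬ G.Adj y z) : ¬ G.Adj x z := by
  intro hxz
  obtain ⟨s, hxs, hzs⟩ := common_nbr hpf htri hxz
  obtain ⟨p⟩ := hreach
  exact key_walk hpf hzs y x p hxz hxs (fun h => hyx h.symm) hyz


open SimpleGraph in
lemma cliqueNum_le_ncard_range {W α : Type*} [Fintype W] (H : SimpleGraph W) (c : W → α)
    (hc : ∀ u w, H.Adj u w → c u ≠ c w) : H.cliqueNum ≤ (Set.range c).ncard := by
  classical
  obtain ⟨t, htc⟩ := H.exists_isNClique_cliqueNum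
  rw [← htc.card_eq]
  have hinj : Set.InjOn c ↑t := by
    intro u hu w hw hcw
    by_contra hne
    exact hc u w (htc.isClique hu hw hne) hcw
  calc t.card = (t.image c).card := (Finset.card_image_of_injOn hinj).symm
    _ = ((t.image c : Finset α) : Set α).ncard := (Set.ncard_coe_finset _).symm
    _ ≤ (Set.range c).ncard := by
        refine Set.ncard_le_ncard ?_ (Set.finite_range c)
        intro x hx
        simp only [Finset.coe_image, Set.mem_image] at hx
        obtain ⟨a, _, rfl⟩ := hx
        exact Set.mem_range_self a

open SimpleGraph in
lemma ncard_range_le_cliqueNum {W α : Type*} [Fintype W] [Nonempty W] (H : SimpleGraph W)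
    (c : W → α) (hadj : ∀ u w, c u ≠ c w → H.Adj u w) :
    (Set.range c).ncard ≤ H.cliqueNum := by
  classical
  have hfin : (Set.range c).Finite := Set.finite_range c
  set T := hfin.toFinset with hT
  let rep : α → W := fun t => if h : ∃ u, c u = t then h.choose else Classical.arbitrary W
  have hrep : ∀ t ∈ T, c (rep t) = t := by
    intro t ht
    rw [hT, Set.Finite.mem_toFinset] at ht
    obtain ⟨u, hu⟩ := ht
    simp only [rep, dif_pos (⟨u, hu⟩ : ∃ u, c u = t)]
    exact (⟨u, hu⟩ : ∃ u, c u = t).choose_spec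
  have hinj : Set.InjOn rep ↑T := by
    intro a ha b hb h
    rw [← hrep a ha, ← hrep b hb, h]
  have hclique : H.IsClique ↑(T.image rep) := by
    intro u hu w hw hne
    simp only [Finset.coe_image, Set.mem_image, Finset.mem_coe] at hu hw
    obtain ⟨a, ha, rfl⟩ := hu
    obtain ⟨b, hb, rfl⟩ := hw
    refine hadj _ _ ?_
    rw [hrep a ha, hrep b hb]
    intro h; exact hne (by rw [h])
  calc (Set.range c).ncard = T.card := Set.ncard_eq_toFinset_card _ hfin
    _ = (T.image rep).card := (Finset.card_image_of_injOn hinj).symm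
    _ ≤ H.cliqueNum := hclique.card_le_cliqueNum

open SimpleGraph in
lemma cliqueNum_le_two_of_no_triangle {W : Type*} [Fintype W] (H : SimpleGraph W)
    (h : ∀ a b c : W, H.Adj a b → H.Adj a c → H.Adj b c → False) : H.cliqueNum ≤ 2 := by
  classical
  by_contra h3
  push_neg at h3
  obtain ⟨t, htc⟩ := H.exists_isNClique_cliqueNum
  obtain ⟨u, hut, hu3⟩ := Finset.exists_subset_card_eq (n := 3) (by rw [htc.card_eq]; omega)
  have h3c : H.IsNClique 3 u := ⟨htc.isClique.subset hut, hu3⟩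
  rw [SimpleGraph.is3Clique_iff] at h3c
  obtain ⟨a, b, c, hab, hac, hbc, -⟩ := h3c
  exact h a b c hab hac hbc

end Olariu
end AuxLemmas

/-- If a graph is perfect and paw-free, then it is perfectly colorable. -/
theorem perfectlyColorable_of_isPerfect_and_pawFree {V : Type*} [Fintype V]
    (G : SimpleGraph V) (hp : G.IsPerfect) (hf : G.PawFree) :
    G.PerfectlyColorable := by
  classical
  let part : V → Set V := fun v => {w | ¬ G.Adj v w ∧ G.Reachable v w}
  let hTri : G.ConnectedComponent → Prop := fun K => ∃ a, G.connectedComponentMk a = K ∧ InTri G a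
  -- a proper 2-coloring of each triangle-free component
  have hcol : ∀ K : G.ConnectedComponent, ¬ hTri K →
      ∃ c : K.supp → Fin 2, ∀ u w, (G.induce K.supp).Adj u w → c u ≠ c w := by
    intro K hK
    haveI : Fintype ↥K.supp := Fintype.ofFinite _
    have h2 : (G.induce K.supp).cliqueNum ≤ 2 := by
      apply cliqueNum_le_two_of_no_triangle
      rintro ⟨a, ha⟩ b c hab hac hbc
      exact hK ⟨a, (SimpleGraph.ConnectedComponent.mem_supp_iff _ _).1 ha,
        ⟨↑b, ↑c, hab, hac, hbc⟩⟩
    have hcol2 : (G.induce K.supp).Colorable 2 := by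
      rw [← SimpleGraph.chromaticNumber_le_iff_colorable, hp K.supp]
      exact_mod_cast h2
    obtain ⟨c⟩ := hcol2
    exact ⟨c, fun u w h => c.valid h⟩
  choose cB hcB using hcol
  have cB_congr : ∀ {K K' : G.ConnectedComponent} (e : K = K') (hK : ¬ hTri K)
      (hK' : ¬ hTri K') (w : V) (m : w ∈ K.supp) (m' : w ∈ K'.supp),
      cB K hK ⟨w, m⟩ = cB K' hK' ⟨w, m'⟩ := by
    rintro K K' rfl hK hK' w m m'; rfl
  have memsupp : ∀ v : V, v ∈ (G.connectedComponentMk v).supp := fun v =>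
    (SimpleGraph.ConnectedComponent.mem_supp_iff _ _).2 rfl
  let C0 : V → Set V ⊕ (G.ConnectedComponent × Fin 2) := fun v =>
    if h : hTri (G.connectedComponentMk v) then Sum.inl (part v)
    else Sum.inr (G.connectedComponentMk v, cB _ h ⟨v, memsupp v⟩)
  -- key fact in triangle components: equal parts iff non-adjacent
  have part_eq_of_not_adj : ∀ {u w : V}, G.Reachable u w → InTri G u → ¬ G.Adj u w →
      part u = part w := by
    intro u w hr htri hnadj
    have htriw : InTri G w := inTri_of_reachable hf htri hr
    ext t
    simp only [part, Set.mem_setOf_eq]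
    constructor
    · rintro ⟨hnt, hrt⟩
      exact ⟨olariu_s12 hf hr htriw (fun h => hnadj h.symm) hnt, hr.symm.trans hrt⟩
    · rintro ⟨hnt, hrt⟩
      exact ⟨olariu_s12 hf hr.symm htri hnadj hnt, hr.trans hrt⟩
  have valid : ∀ {u w : V}, G.Adj u w → C0 u ≠ C0 w := by
    intro u w h hC
    have hmk : G.connectedComponentMk u = G.connectedComponentMk w :=
      SimpleGraph.ConnectedComponent.connectedComponentMk_eq_of_adj h
    by_cases ht : hTri (G.connectedComponentMk u)
    · have ht' : hTri (G.connectedComponentMk w) := hmk ▸ ht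
      simp only [C0, dif_pos ht, dif_pos ht', Sum.inl.injEq] at hC
      have hw : w ∈ part w := ⟨G.irrefl, SimpleGraph.Reachable.refl w⟩
      rw [← hC] at hw
      exact hw.1 h
    · have ht' : ¬ hTri (G.connectedComponentMk w) := fun hh => ht (hmk ▸ hh)
      simp only [C0, dif_neg ht, dif_neg ht', Sum.inr.injEq, Prod.mk.injEq] at hC
      have h2 : cB _ ht' ⟨w, memsupp w⟩ = cB _ ht ⟨w, hmk ▸ memsupp w⟩ :=
        cB_congr hmk.symm ht' ht w _ _
      rw [h2] at hC
      exact hcB _ ht ⟨u, memsupp u⟩ ⟨w, hmk ▸ memsupp w⟩ h hC.2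
  haveI : Finite (Set V ⊕ (G.ConnectedComponent × Fin 2)) := by
    haveI : Finite (Set V) := by infer_instance
    haveI : Finite G.ConnectedComponent := by
      haveI : Fintype G.ConnectedComponent := Fintype.ofFinite _
      infer_instance
    infer_instance
  haveI : Fintype (Set V ⊕ (G.ConnectedComponent × Fin 2)) := Fintype.ofFinite _
  let n := Fintype.card (Set V ⊕ (G.ConnectedComponent × Fin 2))
  let e : (Set V ⊕ (G.ConnectedComponent × Fin 2)) ≃ Fin n := Fintype.equivFin _
  refine ⟨Fin n, SimpleGraph.Coloring.mk (fun v => e (C0 v))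
    (fun h hc => valid h (e.injective hc)), ?_⟩
  intro S hconn
  show ((fun v => e (C0 v)) '' S).ncard = (G.induce S).cliqueNum
  have himge : (fun v => e (C0 v)) '' S = e '' (C0 '' S) := by
    rw [Set.image_image]
  rw [himge, Set.ncard_image_of_injective _ e.injective]
  have hSne : S.Nonempty := by
    obtain ⟨⟨v, hv⟩⟩ := hconn.nonempty
    exact ⟨v, hv⟩
  obtain ⟨v0, hv0⟩ := hSne
  haveI : Fintype ↥S := Fintype.ofFinite _
  haveI : Nonempty ↥S := ⟨⟨v0, hv0⟩⟩
  set K := G.connectedComponentMk v0 with hK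
  have hsame : ∀ u : ↥S, G.connectedComponentMk ↑u = K := by
    intro u
    have hr : (G.induce S).Reachable u ⟨v0, hv0⟩ := hconn.preconnected u ⟨v0, hv0⟩
    have hr' : G.Reachable ↑u v0 := hr.map (SimpleGraph.Embedding.induce S).toHom
    exact SimpleGraph.ConnectedComponent.sound hr'
  have hreach : ∀ u w : ↥S, G.Reachable ↑u ↑w := by
    intro u w
    exact ((hconn.preconnected u w).map (SimpleGraph.Embedding.induce S).toHom)
  let cS : ↥S → Set V ⊕ (G.ConnectedComponent × Fin 2) := fun v => C0 ↑v
  have himg : C0 '' S = Set.range cS := Set.image_eq_range _ _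
  rw [himg]
  have hcS_ne : ∀ u w : ↥S, (G.induce S).Adj u w → cS u ≠ cS w := fun u w h => valid h
  by_cases hKt : hTri K
  · -- complete multipartite component
    obtain ⟨a, haK, hatri⟩ := hKt
    have htri : ∀ u : ↥S, InTri G ↑u := by
      intro u
      have : G.Reachable a ↑u := SimpleGraph.ConnectedComponent.exact (by rw [haK, hsame u])
      exact inTri_of_reachable hf hatri this
    refine le_antisymm ?_ (cliqueNum_le_ncard_range _ cS hcS_ne)
    apply ncard_range_le_cliqueNum
    intro u w hne
    by_contra hnadj
    apply hne
    have hpe : part ↑u = part ↑w := part_eq_of_not_adj (hreach u w) (htri u) hnadj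
    have htu : hTri (G.connectedComponentMk ↑u) := by rw [hsame u]; exact ⟨a, haK, hatri⟩
    have htw : hTri (G.connectedComponentMk ↑w) := by rw [hsame w]; exact ⟨a, haK, hatri⟩
    simp only [cS, C0, dif_pos htu, dif_pos htw, hpe]
  · -- triangle-free component
    have hallC : ∀ u : ↥S, ∃ b : Fin 2, cS u = Sum.inr (K, b) := by
      intro u
      have ht' : ¬ hTri (G.connectedComponentMk ↑u) := by rw [hsame u]; exact hKt
      have m' : ↑u ∈ K.supp := (SimpleGraph.ConnectedComponent.mem_supp_iff _ _).2 (hsame u)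
      refine ⟨cB K hKt ⟨↑u, m'⟩, ?_⟩
      simp only [cS, C0, dif_neg ht']
      exact congrArg Sum.inr (Prod.ext (hsame u) (cB_congr (hsame u) ht' hKt _ _ _))
    by_cases hedge : ∃ u w : ↥S, (G.induce S).Adj u w
    · obtain ⟨u0, w0, huw⟩ := hedge
      have hno3 : ∀ a b c : ↥S, (G.induce S).Adj a b → (G.induce S).Adj a c →
          (G.induce S).Adj b c → False := by
        intro a b c hab hac hbc
        exact hKt (by rw [← hsame a]; exact ⟨↑a, rfl, ⟨↑b, ↑c, hab, hac, hbc⟩⟩)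
      have hclique2 : 2 ≤ (G.induce S).cliqueNum := by
        have hcl : (G.induce S).IsClique ↑({u0, w0} : Finset ↥S) := by
          rw [Finset.coe_pair]
          exact SimpleGraph.isClique_pair.2 (fun _ => huw)
        have hcard : ({u0, w0} : Finset ↥S).card = 2 := Finset.card_pair huw.ne
        calc 2 = ({u0, w0} : Finset ↥S).card := hcard.symm
          _ ≤ _ := hcl.card_le_cliqueNum
      have hup : (G.induce S).cliqueNum ≤ 2 := cliqueNum_le_two_of_no_triangle _ hno3
      have hr2 : (Set.range cS).ncard = 2 := by
        apply le_antisymm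
        · have hsub : Set.range cS ⊆ {Sum.inr (K, 0), Sum.inr (K, 1)} := by
            rintro x ⟨u, rfl⟩
            obtain ⟨b, hb⟩ := hallC u
            fin_cases b <;> simp [hb]
          calc (Set.range cS).ncard ≤ ({Sum.inr (K, 0), Sum.inr (K, 1)} :
              Set (Set V ⊕ (G.ConnectedComponent × Fin 2))).ncard :=
                Set.ncard_le_ncard hsub (Set.toFinite _)
            _ ≤ 2 := (Set.ncard_insert_le _ _).trans (by simp)
        · have hne : cS u0 ≠ cS w0 := hcS_ne _ _ huw
          have hsub : ({cS u0, cS w0} : Set _) ⊆ Set.range cS := by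
            intro x hx
            simp only [Set.mem_insert_iff, Set.mem_singleton_iff] at hx
            rcases hx with rfl | rfl
            · exact ⟨u0, rfl⟩
            · exact ⟨w0, rfl⟩
          calc 2 = ({cS u0, cS w0} : Set _).ncard := (Set.ncard_pair hne).symm
            _ ≤ (Set.range cS).ncard := Set.ncard_le_ncard hsub (Set.finite_range _)
      omega
    · -- no edges: S is a single vertex
      push_neg at hedge
      have hsub : ∀ u w : ↥S, u = w := by
        intro u w
        obtain ⟨p⟩ := hconn.preconnected u w
        cases p with
        | nil => rfl
        | cons h q => exact absurd h (hedge _ _)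
      have hS1 : (Set.range cS).ncard = 1 := by
        have : Set.range cS = {cS ⟨v0, hv0⟩} := by
          apply Set.eq_singleton_iff_unique_mem.2
          exact ⟨⟨_, rfl⟩, by rintro x ⟨u, rfl⟩; rw [hsub u ⟨v0, hv0⟩]⟩
        rw [this, Set.ncard_singleton]
      have hc1 : (G.induce S).cliqueNum = 1 := by
        apply le_antisymm
        · have := cliqueNum_le_ncard_range (G.induce S) (fun _ => (0 : Fin 1))
            (fun u w h => absurd h (hedge u w))
          calc (G.induce S).cliqueNum ≤ (Set.range fun _ : ↥S => (0 : Fin 1)).ncard := this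
            _ ≤ 1 := by rw [Set.range_const]; simp
        · have hcl1 : (G.induce S).IsClique ↑({⟨v0, hv0⟩} : Finset ↥S) := by
            rw [Finset.coe_singleton]
            exact SimpleGraph.isClique_singleton _
          calc 1 = ({⟨v0, hv0⟩} : Finset ↥S).card := by simp
            _ ≤ _ := hcl1.card_le_cliqueNum
      rw [hS1, hc1]
end
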